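/- arXiv:1903.00245 — 6 statements merged into one kernel-verified Lean document; each statement's English description precedes it below -/
import Mathlib

section
/- Let G be a graph on n vertices with at least c·C(n,2) edges, where c ∈ (0,1). If G does not contain K_{2,2} as an induced subgraph, then G has a complete subgraph on at least (c²/10)·n vertices. -/
open Finset

/-- `G` contains `K_{2,2}` as an induced subgraph: there are four distinct vertices
`x₁, x₂, y₁, y₂` with all cross pairs adjacent and `x₁x₂`, `y₁y₂` non-adjacent. -/
def HasInducedK22 {V : Type*} (G : SimpleGraph V) : Prop :=
  ∃ x₁ x₂ y₁ y₂ : V,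
    x₁ ≠ x₂ ∧ x₁ ≠ y₁ ∧ x₁ ≠ y₂ ∧ x₂ ≠ y₁ ∧ x₂ ≠ y₂ ∧ y₁ ≠ y₂ ∧
    G.Adj x₁ y₁ ∧ G.Adj x₁ y₂ ∧ G.Adj x₂ y₁ ∧ G.Adj x₂ y₂ ∧
    ¬ G.Adj x₁ x₂ ∧ ¬ G.Adj y₁ y₂

theorem gyarfas_hubenko_solymosi (n : ℕ) (c : ℝ) (hc : c ∈ Set.Ioo (0 : ℝ) 1)
    (G : SimpleGraph (Fin n)) [Fintype G.edgeSet]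
    (hedges : c * (n.choose 2 : ℝ) ≤ (G.edgeFinset.card : ℝ))
    (hK22 : ¬ HasInducedK22 G) :
    ∃ S : Finset (Fin n), G.IsClique (S : Set (Fin n)) ∧
      (c ^ 2 / 10) * (n : ℝ) ≤ (S.card : ℝ) := by
  classical
  obtain ⟨hc0, hc1⟩ := hc
  by_cases hK1 : c ^ 2 / 10 * (n : ℝ) ≤ 1
  · rcases Nat.eq_zero_or_pos n with hn | hn
    · refine ⟨∅, by simp, ?_⟩
      subst hn; simp
    · refine ⟨{⟨0, hn⟩}, ?_, ?_⟩
      · rw [SimpleGraph.isClique_iff]; simp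
      · simpa using hK1
  push_neg at hK1
  by_contra hcon
  push_neg at hcon
  -- `hcon : ∀ S, G.IsClique ↑S → (S.card : ℝ) < c ^ 2 / 10 * n`
  set K : ℝ := c ^ 2 / 10 * (n : ℝ) with hKdef
  have hc2 : c ^ 2 < 1 := by nlinarith
  have hn10 : (10 : ℝ) < (n : ℝ) := by
    have h1 : c ^ 2 * (n : ℝ) ≤ 1 * (n : ℝ) :=
      mul_le_mul_of_nonneg_right hc2.le (Nat.cast_nonneg n)
    linarith
  have hnn : (0 : ℕ) < n := by
    by_contra h
    push_neg at h
    interval_cases n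
    norm_num at hn10
  set Nr : ℝ := (n : ℝ) - 1 with hNrdef
  have hNr9 : (9 : ℝ) < Nr := by simp only [hNrdef]; linarith
  have hKn : K = c ^ 2 / 10 * (Nr + 1) := by simp [hKdef, hNrdef]
  set δ : ℝ := c * Nr / 2 with hδdef
  have hδ : 0 < δ := by
    have : 0 < Nr := by linarith
    positivity
  -- helper: common neighbours of non-adjacent vertices are pairwise adjacent
  have clique_help : ∀ u w : Fin n, u ≠ w → ¬ G.Adj u w → ∀ z z' : Fin n,
      G.Adj u z → G.Adj u z' → G.Adj w z → G.Adj w z' → z ≠ z' → G.Adj z z' := by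
    intro u w hne hna z z' h1 h2 h3 h4 hzz
    by_contra hzz'
    exact hK22 ⟨u, w, z, z', hne, h1.ne, h2.ne, h3.ne, h4.ne, hzz, h1, h2, h3, h4, hna, hzz'⟩
  -- Step 1 : total degree count
  have hdegsum : c * (n : ℝ) * Nr ≤ ∑ v : Fin n, ((univ.filter (G.Adj v)).card : ℝ) := by
    have hfil : ∀ v : Fin n, univ.filter (G.Adj v) = G.neighborFinset v := by
      intro v; ext w; simp [SimpleGraph.mem_neighborFinset]
    have hcard_eq : (@SimpleGraph.edgeFinset _ G G.fintypeEdgeSet).card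
        = G.edgeFinset.card := by
      rw [Subsingleton.elim G.fintypeEdgeSet ‹Fintype G.edgeSet›]
    have h2e : ∑ v : Fin n, G.degree v = 2 * G.edgeFinset.card := by
      rw [← hcard_eq]
      exact G.sum_degrees_eq_twice_card_edges
    have hch : ((n.choose 2 : ℕ) : ℝ) = (n : ℝ) * ((n : ℝ) - 1) / 2 := Nat.cast_choose_two ℝ n
    have : ∑ v : Fin n, ((univ.filter (G.Adj v)).card : ℝ)
        = 2 * (G.edgeFinset.card : ℝ) := by
      rw [← Nat.cast_ofNat, ← Nat.cast_mul, ← h2e]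
      push_cast
      refine Finset.sum_congr rfl fun v _ => ?_
      rw [hfil v]
      rfl
    rw [this]
    rw [hch] at hedges
    simp only [hNrdef]
    linarith
  -- Step 2 : pass to a subgraph with min degree ≥ δ
  have mindeg : ∀ (k : ℕ) (T : Finset (Fin n)), T.card ≤ k → T.Nonempty →
      2 * δ * T.card ≤ ∑ u ∈ T, ((T.filter (G.Adj u)).card : ℝ) →
      ∃ T' : Finset (Fin n), T'.Nonempty ∧
        ∀ v ∈ T', δ ≤ ((T'.filter (G.Adj v)).card : ℝ) := by
    intro k
    induction k with
    | zero =>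
      intro T hT hne _
      rw [Nat.le_zero, Finset.card_eq_zero] at hT
      simp [hT] at hne
    | succ k ih =>
      intro T hTk hne hinv
      by_cases hall : ∀ v ∈ T, δ ≤ ((T.filter (G.Adj v)).card : ℝ)
      · exact ⟨T, hne, hall⟩
      push_neg at hall
      obtain ⟨v, hvT, hvlt⟩ := hall
      have hcard1 : 1 ≤ T.card := Finset.card_pos.mpr hne
      -- the double-count identity for removing v
      have h1 : ∀ u ∈ T.erase v, (((T.erase v).filter (G.Adj u)).card : ℝ)
          = ((T.filter (G.Adj u)).card : ℝ) - (if G.Adj u v then 1 else 0) := by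
        intro u hu
        rw [Finset.filter_erase]
        by_cases hA : G.Adj u v
        · have hvm : v ∈ T.filter (G.Adj u) := Finset.mem_filter.mpr ⟨hvT, hA⟩
          have := Finset.card_erase_add_one hvm
          rw [if_pos hA]
          push_cast [← this]
          ring
        · rw [if_neg hA, Finset.erase_eq_of_notMem (by simp [hA])]
          ring
      have h3 : ∑ u ∈ T.erase v, (if G.Adj u v then (1 : ℝ) else 0)
          = ((T.filter (G.Adj v)).card : ℝ) := by
        rw [Finset.sum_boole]
        congr 1
        have : (T.erase v).filter (fun u => G.Adj u v) = T.filter (G.Adj v) := by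
          ext u
          simp only [Finset.mem_filter, Finset.mem_erase]
          constructor
          · rintro ⟨⟨hne', hu⟩, ha⟩; exact ⟨hu, ha.symm⟩
          · rintro ⟨hu, ha⟩; exact ⟨⟨ha.ne', hu⟩, ha.symm⟩
        rw [this]
      have hWT2 : ∑ u ∈ T.erase v, (((T.erase v).filter (G.Adj u)).card : ℝ)
          = (∑ u ∈ T, ((T.filter (G.Adj u)).card : ℝ))
            - 2 * ((T.filter (G.Adj v)).card : ℝ) := by
        rw [Finset.sum_congr rfl h1, Finset.sum_sub_distrib, h3]
        have h2 : ∑ u ∈ T.erase v, ((T.filter (G.Adj u)).card : ℝ)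
            = (∑ u ∈ T, ((T.filter (G.Adj u)).card : ℝ))
              - ((T.filter (G.Adj v)).card : ℝ) := by
          have := Finset.sum_erase_add T
            (fun u => ((T.filter (G.Adj u)).card : ℝ)) hvT
          linarith
        rw [h2]; ring
      have hne2 : (T.erase v).Nonempty := by
        rw [← Finset.card_pos, Finset.card_erase_of_mem hvT]
        by_contra h
        push_neg at h
        have hT1 : T.card = 1 := by omega
        obtain ⟨w, hw⟩ := Finset.card_eq_one.mp hT1
        subst hw
        simp only [Finset.mem_singleton] at hvT
        subst hvT
        have : ({v} : Finset (Fin n)).filter (G.Adj v) = ∅ := by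
          ext z; simp only [Finset.mem_filter, Finset.mem_singleton, Finset.notMem_empty,
            iff_false, not_and]
          rintro rfl
          exact G.irrefl
        rw [Finset.sum_singleton, this] at hinv
        simp at hinv
        linarith
      have hcarde : ((T.erase v).card : ℝ) = (T.card : ℝ) - 1 := by
        rw [Finset.card_erase_of_mem hvT]
        push_cast [Nat.cast_sub hcard1]
        ring
      refine ih (T.erase v) ?_ hne2 ?_
      · rw [Finset.card_erase_of_mem hvT]; omega
      · rw [hWT2, hcarde]
        linarith
  obtain ⟨T, hTne, hTmin⟩ := mindeg n univ (by simp)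
    (Finset.univ_nonempty_iff.mpr ⟨⟨0, hnn⟩⟩)
    (by
      have : ((univ : Finset (Fin n)).card : ℝ) = (n : ℝ) := by simp
      rw [this]
      calc 2 * δ * (n : ℝ) = c * (n : ℝ) * Nr := by rw [hδdef]; ring
      _ ≤ _ := hdegsum)
  -- Step 3 : the minimum-degree vertex x of T and its neighbourhood A
  obtain ⟨x, hxT, hxmin⟩ := T.exists_min_image (fun u => (T.filter (G.Adj u)).card) hTne
  set A : Finset (Fin n) := T.filter (G.Adj x) with hAdef
  set D : ℕ := A.card with hDdef
  have hDδ : δ ≤ (D : ℝ) := hTmin x hxT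
  have hDpos : 0 < D := by
    by_contra h
    push_neg at h
    interval_cases D
    simp at hDδ
    linarith
  have hxA : x ∉ A := by simp [hAdef]
  have hAx : ∀ u ∈ A, G.Adj x u := fun u hu => (Finset.mem_filter.mp hu).2
  have hAT : A ⊆ T := Finset.filter_subset _ _
  have hxAT : insert x A ⊆ T := by
    intro z hz
    rcases Finset.mem_insert.mp hz with rfl | hz'
    · exact hxT
    · exact hAT hz'
  set B : Finset (Fin n) := T \ insert x A with hBdef
  have hBprop : ∀ y ∈ B, y ∈ T ∧ y ≠ x ∧ ¬ G.Adj x y := by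
    intro y hy
    rw [hBdef, Finset.mem_sdiff, Finset.mem_insert] at hy
    push_neg at hy
    obtain ⟨hyT, hyx, hyA⟩ := hy
    refine ⟨hyT, hyx, fun hadj => hyA ?_⟩
    exact Finset.mem_filter.mpr ⟨hyT, hadj⟩
  have hsplit : insert x A ∪ B = T := Finset.union_sdiff_of_subset hxAT
  have hdisj : Disjoint (insert x A) B := Finset.disjoint_sdiff
  -- decomposition of degrees of vertices of A
  have hdecomp : ∀ u ∈ A, ((T.filter (G.Adj u)).card : ℝ)
      = ((A.filter (G.Adj u)).card : ℝ) + ((B.filter (G.Adj u)).card : ℝ) + 1 := by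
    intro u hu
    have hux : G.Adj u x := (hAx u hu).symm
    have hsp : T.filter (G.Adj u) = insert x (A.filter (G.Adj u)) ∪ B.filter (G.Adj u) := by
      rw [← hsplit, Finset.filter_union, Finset.filter_insert, if_pos hux]
    have hd2 : Disjoint (insert x (A.filter (G.Adj u))) (B.filter (G.Adj u)) := by
      refine Finset.disjoint_of_subset_left ?_ (Finset.disjoint_of_subset_right
        (Finset.filter_subset _ _) hdisj)
      intro z hz
      rcases Finset.mem_insert.mp hz with rfl | hz'
      · exact Finset.mem_insert_self _ _
      · exact Finset.mem_insert_of_mem (Finset.filter_subset _ _ hz')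
    have hxnf : x ∉ A.filter (G.Adj u) := fun h => hxA (Finset.filter_subset _ _ h)
    rw [hsp, Finset.card_union_of_disjoint hd2, Finset.card_insert_of_notMem hxnf]
    push_cast
    ring
  have hsumlow : (D : ℝ) * D ≤ ∑ u ∈ A, ((T.filter (G.Adj u)).card : ℝ) := by
    have hpt : ∀ u ∈ A, (D : ℝ) ≤ ((T.filter (G.Adj u)).card : ℝ) := by
      intro u hu
      exact_mod_cast hxmin u (hAT hu)
    calc (D : ℝ) * D = ∑ _u ∈ A, (D : ℝ) := by
          rw [Finset.sum_const, ← hDdef, nsmul_eq_mul]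
      _ ≤ _ := Finset.sum_le_sum hpt
  -- cross edge double count
  have hcross : ∑ u ∈ A, ((B.filter (G.Adj u)).card : ℝ)
      = ∑ y ∈ B, ((A.filter (G.Adj y)).card : ℝ) := by
    have l : ∀ (S S' : Finset (Fin n)), ∑ u ∈ S, ((S'.filter (G.Adj u)).card : ℝ)
        = ∑ u ∈ S, ∑ y ∈ S', if G.Adj u y then (1 : ℝ) else 0 := by
      intro S S'
      refine Finset.sum_congr rfl fun u _ => ?_
      rw [Finset.sum_boole]
    rw [l, l, Finset.sum_comm]
    refine Finset.sum_congr rfl fun y _ => Finset.sum_congr rfl fun u _ => ?_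
    simp [SimpleGraph.adj_comm]
  -- each outside vertex has few neighbours in A
  have hyb : ∀ y ∈ B, ((A.filter (G.Adj y)).card : ℝ) < K - 1 := by
    intro y hy
    obtain ⟨hyT, hyx, hyadj⟩ := hBprop y hy
    have hclq : G.IsClique ↑(insert x (A.filter (G.Adj y))) := by
      rw [SimpleGraph.isClique_iff]
      intro a ha b hb hab
      simp only [Finset.coe_insert, Set.mem_insert_iff, Finset.mem_coe,
        Finset.mem_filter] at ha hb
      rcases ha with rfl | ⟨haA, hay⟩
      · rcases hb with rfl | ⟨hbA, hby⟩
        · exact absurd rfl hab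
        · exact hAx b hbA
      · rcases hb with rfl | ⟨hbA, hby⟩
        · exact (hAx a haA).symm
        · exact clique_help x y (Ne.symm hyx) hyadj a b (hAx a haA) (hAx b hbA) hay hby hab
    have hcc := hcon _ hclq
    rw [Finset.card_insert_of_notMem (fun h => hxA (Finset.filter_subset _ _ h))] at hcc
    push_cast at hcc
    linarith
  have hBcard : ((B.card : ℕ) : ℝ) ≤ Nr - D := by
    have h1 : B.card = T.card - (insert x A).card := Finset.card_sdiff_of_subset hxAT
    have h2 : (insert x A).card = D + 1 := Finset.card_insert_of_notMem hxA
    have h3 : (insert x A).card ≤ T.card := Finset.card_le_card hxAT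
    have h4 : T.card ≤ n := by
      have := Finset.card_le_card (Finset.subset_univ T)
      simpa using this
    rw [h1, h2]
    rw [h2] at h3
    push_cast [Nat.cast_sub h3]
    simp only [hNrdef]
    have h4' : ((T.card : ℕ) : ℝ) ≤ (n : ℝ) := by exact_mod_cast h4
    push_cast
    linarith
  have hKpos : 0 < K - 1 := by linarith
  have hsumA : (D : ℝ) * D - D - (Nr - D) * (K - 1)
      ≤ ∑ u ∈ A, ((A.filter (G.Adj u)).card : ℝ) := by
    have h1 : ∑ u ∈ A, ((T.filter (G.Adj u)).card : ℝ)
        = (∑ u ∈ A, ((A.filter (G.Adj u)).card : ℝ))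
          + (∑ u ∈ A, ((B.filter (G.Adj u)).card : ℝ)) + D := by
      rw [Finset.sum_congr rfl hdecomp]
      rw [Finset.sum_add_distrib, Finset.sum_add_distrib, Finset.sum_const, ← hDdef]
      simp
    have h2 : ∑ y ∈ B, ((A.filter (G.Adj y)).card : ℝ) ≤ (B.card : ℝ) * (K - 1) := by
      calc ∑ y ∈ B, ((A.filter (G.Adj y)).card : ℝ) ≤ ∑ _y ∈ B, (K - 1) :=
            Finset.sum_le_sum (fun y hy => le_of_lt (hyb y hy))
        _ = (B.card : ℝ) * (K - 1) := by rw [Finset.sum_const, nsmul_eq_mul]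
    have h3 : (B.card : ℝ) * (K - 1) ≤ (Nr - D) * (K - 1) :=
      mul_le_mul_of_nonneg_right hBcard (le_of_lt hKpos)
    rw [h1] at hsumlow
    rw [hcross] at hsumlow
    linarith
  -- the non-degree function inside A
  set nd : Fin n → ℝ := fun u => (D : ℝ) - 1 - ((A.filter (G.Adj u)).card : ℝ) with hnd
  have hndsum : ∑ u ∈ A, nd u ≤ (Nr - D) * (K - 1) := by
    simp only [hnd]
    rw [Finset.sum_sub_distrib, Finset.sum_const, ← hDdef, nsmul_eq_mul]
    linarith
  have hndnn : ∀ u ∈ A, 0 ≤ nd u := by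
    intro u hu
    have hsub : A.filter (G.Adj u) ⊆ A.erase u := by
      intro z hz
      obtain ⟨hzA, hz2⟩ := Finset.mem_filter.mp hz
      exact Finset.mem_erase.mpr ⟨hz2.ne', hzA⟩
    have hcl := Finset.card_le_card hsub
    rw [Finset.card_erase_of_mem hu] at hcl
    have : ((A.filter (G.Adj u)).card : ℝ) ≤ (D : ℝ) - 1 := by
      have hD1 : 1 ≤ D := hDpos
      calc ((A.filter (G.Adj u)).card : ℝ) ≤ ((D - 1 : ℕ) : ℝ) := by exact_mod_cast hcl
        _ = (D : ℝ) - 1 := by push_cast [Nat.cast_sub hD1]; ring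
    simp only [hnd]
    linarith
  set θ : ℝ := ((D : ℝ) - K + 1) / 2 with hθdef
  have hNrpos : (0 : ℝ) < Nr := by linarith
  have hDcNr : c * Nr / 2 ≤ (D : ℝ) := hDδ
  clear_value K Nr δ D θ nd
  have hθpos : 0 < θ := by
    rw [hθdef, hKn]
    have h1 : c * Nr / 2 ≤ (D : ℝ) := hDcNr
    have hA1 : 0 ≤ c * (1 - c) * Nr :=
      mul_nonneg (mul_nonneg hc0.le (by linarith)) hNrpos.le
    have hA2 : c * c < c * (4 * Nr) := by
      apply mul_lt_mul_of_pos_left _ hc0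
      linarith
    linarith only [hA1, hA2, h1]
  set L : Finset (Fin n) := A.filter (fun u => nd u ≤ θ) with hLdef
  have hLsub : L ⊆ A := Finset.filter_subset _ _
  have hxL : x ∉ L := fun h => hxA (hLsub h)
  -- L together with x is a clique
  have hLclq : G.IsClique ↑(insert x L) := by
    rw [SimpleGraph.isClique_iff]
    intro a ha b hb hab
    simp only [Finset.coe_insert, Set.mem_insert_iff, Finset.mem_coe] at ha hb
    rcases ha with rfl | haL
    · rcases hb with rfl | hbL
      · exact absurd rfl hab
      · exact hAx b (hLsub hbL)
    rcases hb with rfl | hbL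
    · exact (hAx a (hLsub haL)).symm
    by_contra hnadj
    have haA := hLsub haL
    have hbA := hLsub hbL
    set Cm : Finset (Fin n) := A.filter (fun z => G.Adj a z ∧ G.Adj b z) with hCm
    have hCmclq : G.IsClique ↑(insert x Cm) := by
      rw [SimpleGraph.isClique_iff]
      intro p hp q hq hpq
      simp only [Finset.coe_insert, Set.mem_insert_iff, Finset.mem_coe, hCm,
        Finset.mem_filter] at hp hq
      rcases hp with rfl | ⟨hpA, hpa, hpb⟩
      · rcases hq with rfl | ⟨hqA, _, _⟩
        · exact absurd rfl hpq
        · exact hAx q hqA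
      rcases hq with rfl | ⟨hqA, hqa, hqb⟩
      · exact (hAx p hpA).symm
      · exact clique_help a b hab hnadj p q hpa hqa hpb hqb hpq
    have hCmcard : (Cm.card : ℝ) < K - 1 := by
      have hcc := hcon _ hCmclq
      rw [Finset.card_insert_of_notMem (fun h => hxA (Finset.filter_subset _ _ h))] at hcc
      push_cast at hcc
      linarith
    set Ma : Finset (Fin n) := A.filter (fun z => ¬ G.Adj a z ∧ z ≠ a) with hMa
    set Mb : Finset (Fin n) := A.filter (fun z => ¬ G.Adj b z ∧ z ≠ b) with hMb
    have hcover : A ⊆ Cm ∪ (Ma ∪ Mb) := by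
      intro z hz
      simp only [Finset.mem_union, hCm, hMa, hMb, Finset.mem_filter]
      by_cases hza : z = a
      · subst hza
        exact Or.inr (Or.inr ⟨hz, fun h => hnadj h.symm, hab⟩)
      by_cases hzb : z = b
      · subst hzb
        exact Or.inr (Or.inl ⟨hz, hnadj, Ne.symm hab⟩)
      by_cases h1 : G.Adj a z
      · by_cases h2 : G.Adj b z
        · exact Or.inl ⟨hz, h1, h2⟩
        · exact Or.inr (Or.inr ⟨hz, h2, hzb⟩)
      · exact Or.inr (Or.inl ⟨hz, h1, hza⟩)
    have hMcard : ∀ (v : Fin n), v ∈ A →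
        ((A.filter (fun z => ¬ G.Adj v z ∧ z ≠ v)).card : ℝ) = nd v := by
      intro v hvA
      have hsplitA : (A.filter (G.Adj v)).card
          + (A.filter (fun z => ¬ G.Adj v z)).card = A.card :=
        Finset.card_filter_add_card_filter_not _
      have hins : A.filter (fun z => ¬ G.Adj v z)
          = insert v (A.filter (fun z => ¬ G.Adj v z ∧ z ≠ v)) := by
        ext z
        simp only [Finset.mem_filter, Finset.mem_insert]
        constructor
        · rintro ⟨hzA, hzn⟩
          by_cases hzv : z = v
          · exact Or.inl hzv
          · exact Or.inr ⟨hzA, hzn, hzv⟩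
        · rintro (rfl | ⟨h1, h2, _⟩)
          · exact ⟨hvA, G.irrefl⟩
          · exact ⟨h1, h2⟩
      have hvnot : v ∉ A.filter (fun z => ¬ G.Adj v z ∧ z ≠ v) := by
        simp
      rw [hins, Finset.card_insert_of_notMem hvnot] at hsplitA
      simp only [hnd]
      rw [hDdef]
      have := hsplitA
      push_cast [← this]
      ring
    have hDcover : (D : ℝ) ≤ (Cm.card : ℝ) + ((Ma.card : ℝ) + (Mb.card : ℝ)) := by
      have hcc := Finset.card_le_card hcover
      have hu1 : (Cm ∪ (Ma ∪ Mb)).card ≤ Cm.card + (Ma ∪ Mb).card := Finset.card_union_le _ _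
      have hu2 : (Ma ∪ Mb).card ≤ Ma.card + Mb.card := Finset.card_union_le _ _
      have : D ≤ Cm.card + (Ma.card + Mb.card) := by rw [hDdef]; omega
      exact_mod_cast this
    have hnda : nd a ≤ θ := (Finset.mem_filter.mp haL).2
    have hndb : nd b ≤ θ := (Finset.mem_filter.mp hbL).2
    rw [hMa] at hDcover
    rw [hMcard a haA] at hDcover
    rw [hMb] at hDcover
    rw [hMcard b hbA] at hDcover
    rw [hθdef] at hnda hndb
    linarith only [hDcover, hCmcard, hnda, hndb]
  have hLcard : (L.card : ℝ) < K - 1 := by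
    have hcc := hcon _ hLclq
    rw [Finset.card_insert_of_notMem hxL] at hcc
    push_cast at hcc
    linarith
  -- counting vertices of large non-degree
  have hALcard : ((A \ L).card : ℝ) = (D : ℝ) - (L.card : ℝ) := by
    rw [Finset.card_sdiff_of_subset hLsub, hDdef]
    have := Finset.card_le_card hLsub
    push_cast [Nat.cast_sub this]
    ring
  have hsum2 : ((A \ L).card : ℝ) * θ ≤ ∑ u ∈ A \ L, nd u := by
    have hbig : ∀ u ∈ A \ L, θ ≤ nd u := by
      intro u hu
      obtain ⟨huA, huL⟩ := Finset.mem_sdiff.mp hu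
      have : ¬ (nd u ≤ θ) := by
        intro h
        exact huL (Finset.mem_filter.mpr ⟨huA, h⟩)
      linarith
    calc ((A \ L).card : ℝ) * θ = ∑ _u ∈ A \ L, θ := by
          rw [Finset.sum_const, nsmul_eq_mul]
      _ ≤ _ := Finset.sum_le_sum hbig
  have hsum3 : ∑ u ∈ A \ L, nd u ≤ ∑ u ∈ A, nd u := by
    have hss := Finset.sum_sdiff (f := nd) hLsub
    have hLnn : 0 ≤ ∑ u ∈ L, nd u :=
      Finset.sum_nonneg fun u hu => hndnn u (hLsub hu)
    linarith
  have hfin1 : ((D : ℝ) - (L.card : ℝ)) * θ ≤ (Nr - D) * (K - 1) := by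
    rw [← hALcard]
    calc ((A \ L).card : ℝ) * θ ≤ ∑ u ∈ A \ L, nd u := hsum2
      _ ≤ ∑ u ∈ A, nd u := hsum3
      _ ≤ (Nr - D) * (K - 1) := hndsum
  have hfin2 : ((D : ℝ) - K + 1) * θ ≤ (Nr - D) * (K - 1) := by
    have h1 : (D : ℝ) - K + 1 ≤ (D : ℝ) - (L.card : ℝ) := by linarith
    have h2 := mul_le_mul_of_nonneg_right h1 hθpos.le
    linarith
  -- final arithmetic contradiction
  have harith : (Nr - D) * (K - 1) < ((D : ℝ) - K + 1) * θ := by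
    have e1 : 2 * Nr * (K - 1) = c ^ 2 * Nr ^ 2 / 5 + c ^ 2 * Nr / 5 - 2 * Nr := by
      rw [hKn]; ring
    have e2 : (0 : ℝ) ≤ (K - 1) ^ 2 := sq_nonneg _
    have h1' : c ^ 2 * Nr ^ 2 / 4 ≤ (D : ℝ) ^ 2 := by
      have h := mul_self_le_mul_self hδ.le hDδ
      rw [hδdef] at h
      linarith [h]
    have hB2 : c ^ 2 * Nr ≤ Nr := by
      have := mul_nonneg (by linarith : (0:ℝ) ≤ 1 - c ^ 2) hNrpos.le
      linarith only [this]
    have hCN : (0 : ℝ) ≤ c ^ 2 * Nr ^ 2 := by positivity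
    have main : 2 * Nr * (K - 1) < (D : ℝ) ^ 2 + (K - 1) ^ 2 := by
      linarith [e1, e2, h1', hB2, hNrpos, hCN]
    rw [hθdef]
    linarith [main]
  linarith
end

section
/- Let G be a graph on n vertices with at least α·C(n,2) edges, where α ∈ (0,1). If G does not contain K_{2,2} as an induced subgraph, then ω(G) ≥ (1 − √(1−α))²·n. -/
open Finset

namespace GHS
open SimpleGraph
open scoped Classical

variable {V : Type} [Fintype V]

/-- number of ordered pairs of distinct non-adjacent vertices (= 2 × non-edges). -/
noncomputable def np (G : SimpleGraph V) : ℕ :=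
  #(univ.filter fun p : V × V => p.1 ≠ p.2 ∧ ¬ G.Adj p.1 p.2)

/-- number of such ordered pairs lying inside the neighborhood of `v`. -/
noncomputable def cp (G : SimpleGraph V) (v : V) : ℕ :=
  #(univ.filter fun p : V × V =>
      (p.1 ≠ p.2 ∧ ¬ G.Adj p.1 p.2) ∧ G.Adj v p.1 ∧ G.Adj v p.2)

lemma pair_card (Q : V → V → Prop) :
    #(univ.filter fun p : V × V => Q p.1 p.2)
      = ∑ v : V, #(univ.filter fun w : V => Q v w) := by
  rw [Finset.card_filter]
  rw [Fintype.sum_prod_type]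
  exact Finset.sum_congr rfl fun v _ => (Finset.card_filter _ _).symm

lemma vertex_split (G : SimpleGraph V) (v : V) :
    #(univ.filter fun w : V => v ≠ w ∧ ¬ G.Adj v w) + G.degree v + 1
      = Fintype.card V := by
  have h := Finset.card_filter_add_card_filter_not
    (s := (univ : Finset V)) (p := fun w => v ≠ w ∧ ¬ G.Adj v w)
  have h2 : (univ.filter fun w : V => ¬ (v ≠ w ∧ ¬ G.Adj v w))
      = insert v (G.neighborFinset v) := by
    ext w
    simp only [mem_filter, mem_univ, true_and, mem_insert, mem_neighborFinset,
      not_and, not_not, ne_eq]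
    constructor
    · intro hw
      by_cases hvw : v = w
      · exact Or.inl hvw.symm
      · exact Or.inr (hw hvw)
    · rintro (rfl | hadj)
      · intro hc; exact absurd rfl hc
      · intro _; exact hadj
  have h3 : v ∉ G.neighborFinset v := by
    simp [G.irrefl]
  rw [h2, Finset.card_insert_of_notMem h3, Finset.card_univ] at h
  unfold SimpleGraph.degree
  omega

lemma np_eq (G : SimpleGraph V) :
    np G + (∑ v, G.degree v) + Fintype.card V
      = Fintype.card V * Fintype.card V := by
  have hp : np G = ∑ v : V, #(univ.filter fun w : V => v ≠ w ∧ ¬ G.Adj v w) := by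
    unfold np
    rw [Finset.card_filter, Fintype.sum_prod_type]
    exact Finset.sum_congr rfl fun v _ => (Finset.card_filter _ _).symm
  rw [hp]
  have : ∀ v : V, #(univ.filter fun w : V => v ≠ w ∧ ¬ G.Adj v w)
      = Fintype.card V - (G.degree v + 1) := by
    intro v; have := vertex_split G v; omega
  rw [Finset.sum_congr rfl (fun v _ => this v)]
  have hdeg : ∀ v : V, G.degree v + 1 ≤ Fintype.card V := by
    intro v; have := vertex_split G v; omega
  have hsum : ∑ v : V, (Fintype.card V - (G.degree v + 1))
      = Fintype.card V * Fintype.card V - (∑ v, (G.degree v + 1)) := by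
    rw [Finset.sum_tsub_distrib]
    · simp [Finset.sum_const, Finset.card_univ, Nat.mul_comm]
    · intro v _; exact hdeg v
  rw [hsum]
  have hle : (∑ v, (G.degree v + 1)) ≤ Fintype.card V * Fintype.card V := by
    calc (∑ v, (G.degree v + 1)) ≤ ∑ _v : V, Fintype.card V :=
          Finset.sum_le_sum (fun v _ => hdeg v)
      _ = Fintype.card V * Fintype.card V := by
          simp [Finset.sum_const, Finset.card_univ, Nat.mul_comm]
  have hsplit : (∑ v, (G.degree v + 1)) = (∑ v, G.degree v) + Fintype.card V := by
    simp [Finset.sum_add_distrib, Finset.card_univ]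
  omega


lemma codeg_le (G : SimpleGraph V) (hfree : ¬ HasInducedK22 G) {u w : V}
    (hne : u ≠ w) (hnadj : ¬ G.Adj u w) :
    #(univ.filter fun z : V => G.Adj z u ∧ G.Adj z w) + 1 ≤ G.cliqueNum := by
  set C := univ.filter fun z : V => G.Adj z u ∧ G.Adj z w with hC
  have hu : u ∉ C := by simp [hC, G.irrefl]
  have hclique : G.IsClique (insert u C : Finset V) := by
    rw [Finset.coe_insert]
    intro a ha b hb hab
    rcases Set.mem_insert_iff.mp ha with rfl | ha'
    · rcases Set.mem_insert_iff.mp hb with rfl | hb'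
      · exact absurd rfl hab
      · have := (Finset.mem_filter.mp hb').2
        exact this.1.symm
    · rcases Set.mem_insert_iff.mp hb with rfl | hb'
      · exact (Finset.mem_filter.mp ha').2.1
      · have ha2 := (Finset.mem_filter.mp ha').2
        have hb2 := (Finset.mem_filter.mp hb').2
        by_contra hab2
        exact hfree ⟨a, b, u, w, hab, G.ne_of_adj ha2.1, G.ne_of_adj ha2.2,
          G.ne_of_adj hb2.1, G.ne_of_adj hb2.2, hne,
          ha2.1, ha2.2, hb2.1, hb2.2, hab2, hnadj⟩
  have hcard : #(insert u C) = #C + 1 := Finset.card_insert_of_notMem hu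
  have := SimpleGraph.IsClique.card_le_cliqueNum (tc := hclique)
  omega

lemma cp_sum (G : SimpleGraph V) (hfree : ¬ HasInducedK22 G) :
    ∑ v, cp G v ≤ np G * (G.cliqueNum - 1) := by
  have hcp : ∀ v : V, cp G v = ∑ p : V × V,
      if (p.1 ≠ p.2 ∧ ¬ G.Adj p.1 p.2) ∧ G.Adj v p.1 ∧ G.Adj v p.2 then 1 else 0 := by
    intro v; unfold cp; rw [Finset.card_filter]
  calc ∑ v, cp G v
      = ∑ p : V × V, ∑ v : V,
          (if (p.1 ≠ p.2 ∧ ¬ G.Adj p.1 p.2) ∧ G.Adj v p.1 ∧ G.Adj v p.2 then 1 else 0) := by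
        rw [Finset.sum_congr rfl fun v _ => hcp v]
        exact Finset.sum_comm
    _ ≤ ∑ p : V × V,
          (if (p.1 ≠ p.2 ∧ ¬ G.Adj p.1 p.2) then G.cliqueNum - 1 else 0) := by
        apply Finset.sum_le_sum
        intro p _
        by_cases hp : p.1 ≠ p.2 ∧ ¬ G.Adj p.1 p.2
        · rw [if_pos hp]
          have h1 : ∑ v : V,
              (if (p.1 ≠ p.2 ∧ ¬ G.Adj p.1 p.2) ∧ G.Adj v p.1 ∧ G.Adj v p.2 then 1 else 0)
              = #(univ.filter fun v : V => G.Adj v p.1 ∧ G.Adj v p.2) := by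
            rw [Finset.card_filter]
            refine Finset.sum_congr rfl fun v _ => ?_
            by_cases hv : G.Adj v p.1 ∧ G.Adj v p.2
            · rw [if_pos ⟨hp, hv⟩, if_pos hv]
            · rw [if_neg (fun hh => hv hh.2), if_neg hv]
          rw [h1]
          have := codeg_le G hfree hp.1 hp.2
          omega
        · rw [if_neg hp]
          have : ∀ v : V,
              (if (p.1 ≠ p.2 ∧ ¬ G.Adj p.1 p.2) ∧ G.Adj v p.1 ∧ G.Adj v p.2 then 1 else 0) = 0 := by
            intro v; rw [if_neg (fun hh => hp hh.1)]
          simp [this]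
    _ = np G * (G.cliqueNum - 1) := by
        unfold np
        rw [Finset.card_filter, Finset.sum_mul]
        refine Finset.sum_congr rfl fun p _ => ?_
        by_cases hp : p.1 ≠ p.2 ∧ ¬ G.Adj p.1 p.2 <;> simp [hp]


lemma free_induce {G : SimpleGraph V} (hfree : ¬ HasInducedK22 G) (s : Set V) :
    ¬ HasInducedK22 (G.induce s) := by
  rintro ⟨x₁, x₂, y₁, y₂, h12, h11, h12', h21, h22, hyy, a11, a12, a21, a22, nx, ny⟩
  exact hfree ⟨x₁, x₂, y₁, y₂,
    Subtype.coe_ne_coe.mpr h12, Subtype.coe_ne_coe.mpr h11, Subtype.coe_ne_coe.mpr h12',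
    Subtype.coe_ne_coe.mpr h21, Subtype.coe_ne_coe.mpr h22, Subtype.coe_ne_coe.mpr hyy,
    a11, a12, a21, a22,
    fun h => nx ((SimpleGraph.comap_adj).mpr h), fun h => ny ((SimpleGraph.comap_adj).mpr h)⟩

lemma np_induce (G : SimpleGraph V) (v : V) :
    np (G.induce (G.neighborSet v)) = cp G v := by
  unfold np cp
  refine Finset.card_bij' (fun p _ => ((p.1 : V), (p.2 : V)))
    (fun q hq => (⟨q.1, by
        simp only [Finset.mem_filter] at hq
        exact hq.2.2.1⟩,
      ⟨q.2, by
        simp only [Finset.mem_filter] at hq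
        exact hq.2.2.2⟩)) ?_ ?_ ?_ ?_
  · intro p hp
    simp only [Finset.mem_filter] at hp ⊢
    obtain ⟨-, h1, h2⟩ := hp
    refine ⟨Finset.mem_univ _, ⟨⟨?_, ?_⟩, ?_, ?_⟩⟩
    · exact Subtype.coe_ne_coe.mpr h1
    · exact fun hadj => h2 ((SimpleGraph.comap_adj).mpr hadj)
    · exact p.1.2
    · exact p.2.2
  · intro q hq
    simp only [Finset.mem_filter] at hq ⊢
    obtain ⟨-, h⟩ := hq
    refine ⟨Finset.mem_univ _, ?_, ?_⟩
    · exact fun hh => h.1.1 (congrArg Subtype.val hh)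
    · exact fun hadj => h.1.2 hadj
  · intro p hp
    exact Prod.ext (Subtype.ext rfl) (Subtype.ext rfl)
  · intro q hq
    exact Prod.ext rfl rfl

lemma cliqueNum_step (G : SimpleGraph V) (v : V) :
    (G.induce (G.neighborSet v)).cliqueNum + 1 ≤ G.cliqueNum := by
  obtain ⟨s, hs⟩ := SimpleGraph.exists_isNClique_cliqueNum
    (G := G.induce (G.neighborSet v))
  have hvnot : v ∉ s.image Subtype.val := by
    intro hv
    obtain ⟨x, -, hx⟩ := Finset.mem_image.mp hv
    have : G.Adj v v := by
      have := x.2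
      rw [SimpleGraph.mem_neighborSet] at this
      rwa [hx] at this
    exact G.irrefl this
  have hclique : G.IsClique (insert v (s.image Subtype.val) : Finset V) := by
    rw [Finset.coe_insert]
    intro a ha b hb hab
    rcases Set.mem_insert_iff.mp ha with rfl | ha'
    · rcases Set.mem_insert_iff.mp hb with rfl | hb'
      · exact absurd rfl hab
      · obtain ⟨x, -, rfl⟩ := Finset.mem_image.mp hb'
        exact (SimpleGraph.mem_neighborSet _ _ _).mp x.2
    · rcases Set.mem_insert_iff.mp hb with rfl | hb'
      · obtain ⟨x, -, rfl⟩ := Finset.mem_image.mp ha'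
        exact ((SimpleGraph.mem_neighborSet _ _ _).mp x.2).symm
      · obtain ⟨x, hx, rfl⟩ := Finset.mem_image.mp ha'
        obtain ⟨y, hy, rfl⟩ := Finset.mem_image.mp hb'
        have hxy : x ≠ y := fun h => hab (congrArg Subtype.val h)
        exact hs.isClique hx hy hxy
  have hcard : #(insert v (s.image Subtype.val))
      = (G.induce (G.neighborSet v)).cliqueNum + 1 := by
    rw [Finset.card_insert_of_notMem hvnot,
      Finset.card_image_of_injective _ Subtype.val_injective, hs.card_eq]
  have hle := SimpleGraph.IsClique.card_le_cliqueNum (tc := hclique)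
  omega

lemma complete_case (G : SimpleGraph V) (h : np G = 0) :
    Fintype.card V ≤ G.cliqueNum := by
  have hclique : G.IsClique (univ : Finset V) := by
    intro a _ b _ hab
    by_contra hnadj
    have : ((a, b) : V × V) ∈
        (univ.filter fun p : V × V => p.1 ≠ p.2 ∧ ¬ G.Adj p.1 p.2) :=
      Finset.mem_filter.mpr ⟨Finset.mem_univ _, hab, hnadj⟩
    unfold np at h
    rw [Finset.card_eq_zero] at h
    rw [h] at this
    exact absurd this (Finset.notMem_empty _)
  have := SimpleGraph.IsClique.card_le_cliqueNum (tc := hclique)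
  rwa [Finset.card_univ] at this


lemma cliqueNum_pos (G : SimpleGraph V) (h : 0 < Fintype.card V) :
    1 ≤ G.cliqueNum := by
  obtain ⟨v⟩ := Fintype.card_pos_iff.mp h
  have hclique : G.IsClique ({v} : Finset V) := by
    intro a ha b hb hab
    simp only [Finset.coe_singleton, Set.mem_singleton_iff] at ha hb
    exact absurd (ha.trans hb.symm) hab
  have := SimpleGraph.IsClique.card_le_cliqueNum (tc := hclique)
  simpa using this

set_option maxHeartbeats 2000000 in
lemma key : ∀ (N : ℕ) (V : Type) [Fintype V] (G : SimpleGraph V),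
    Fintype.card V = N → ¬ HasInducedK22 G →
    ((N : ℝ) - Real.sqrt (np G)) ^ 2 ≤ (G.cliqueNum : ℝ) * N := by
  intro N
  induction N using Nat.strong_induction_on with
  | _ N IH =>
  intro V _ G hcard hfree
  by_cases hP0 : np G = 0
  · -- complete graph case
    rw [hP0]
    have h := complete_case G hP0
    rw [hcard] at h
    have : (N : ℝ) ≤ (G.cliqueNum : ℝ) := by exact_mod_cast h
    simp only [Nat.cast_zero, Real.sqrt_zero, sub_zero]
    nlinarith [Nat.cast_nonneg (α := ℝ) N]
  -- now np G ≥ 1, hence N ≥ 1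
  have hNpos : 0 < N := by
    rcases Nat.eq_zero_or_pos N with h0 | h
    · exfalso
      apply hP0
      have : (univ : Finset (V × V)) = ∅ := by
        rw [← Finset.card_eq_zero, Finset.card_univ]
        simp [Fintype.card_prod, hcard, h0]
      unfold np
      rw [this]
      simp
    · exact h
  have hK1 : 1 ≤ G.cliqueNum := cliqueNum_pos G (by rw [hcard]; exact hNpos)
  have hPn : np G + (∑ w, G.degree w) + N = N * N := by rw [← hcard]; exact np_eq G
  have hnR : (0:ℝ) < (N:ℝ) := by exact_mod_cast hNpos
  have hr2 : Real.sqrt (np G) ^ 2 = ((np G : ℕ) : ℝ) := Real.sq_sqrt (by positivity)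
  have hrpos : 0 < Real.sqrt (np G) :=
    Real.sqrt_pos.mpr (by exact_mod_cast Nat.pos_of_ne_zero hP0)
  set nR : ℝ := (N : ℝ) with hnRdef
  set r : ℝ := Real.sqrt (np G) with hrdef
  have hPle : ((np G : ℕ) : ℝ) + nR ≤ nR^2 := by
    have : np G + N ≤ N * N := by omega
    have h2 : ((np G + N : ℕ) : ℝ) ≤ ((N * N : ℕ) : ℝ) := Nat.cast_le.mpr this
    push_cast at h2
    nlinarith [h2]
  have hrlt : r < nR := by nlinarith [hr2, hPle, hnR, Real.sqrt_nonneg (np G : ℝ)]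
  set A : ℝ := nR - r with hA
  have hApos : 0 < A := by rw [hA]; linarith
  -- choose the optimal vertex
  have hne : (univ : Finset V).Nonempty := by
    rw [← Finset.card_pos, Finset.card_univ, hcard]; exact hNpos
  obtain ⟨v, -, hv⟩ := Finset.exists_max_image univ
    (fun w => (A*r) * (G.degree w : ℝ) - nR * (cp G w : ℝ)) hne
  have hsum_le : ∑ w, ((A*r) * (G.degree w : ℝ) - nR * (cp G w : ℝ))
      ≤ nR * ((A*r) * (G.degree v : ℝ) - nR * (cp G v : ℝ)) := by
    have h := Finset.sum_le_card_nsmul univ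
      (fun w => (A*r) * (G.degree w : ℝ) - nR * (cp G w : ℝ))
      ((A*r) * (G.degree v : ℝ) - nR * (cp G v : ℝ))
      (fun w _ => hv w (Finset.mem_univ w))
    rwa [Finset.card_univ, hcard, nsmul_eq_mul] at h
  have hdeg_sum : ∑ w, (G.degree w : ℝ) = nR^2 - nR - ((np G : ℕ) : ℝ) := by
    have h2 : ((np G + (∑ w, G.degree w) + N : ℕ) : ℝ) = ((N * N : ℕ) : ℝ) := by
      exact_mod_cast congrArg (Nat.cast (R := ℝ)) hPn
    push_cast at h2
    rw [hnRdef]; nlinarith [h2]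
  have hcp_sum : ∑ w, ((cp G w : ℕ) : ℝ) ≤ ((np G : ℕ) : ℝ) * ((G.cliqueNum : ℝ) - 1) := by
    have h := cp_sum G hfree
    have h2 : ((∑ w, cp G w : ℕ) : ℝ) ≤ ((np G * (G.cliqueNum - 1) : ℕ) : ℝ) :=
      Nat.cast_le.mpr h
    rw [Nat.cast_mul, Nat.cast_sub hK1] at h2
    push_cast at h2 ⊢
    exact h2
  have hfsum : (A*r) * (nR^2 - nR - ((np G : ℕ) : ℝ))
        - nR * (((np G : ℕ) : ℝ) * ((G.cliqueNum : ℝ) - 1))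
      ≤ nR * ((A*r) * (G.degree v : ℝ) - nR * (cp G v : ℝ)) := by
    have hsplit : ∑ w, ((A*r) * (G.degree w : ℝ) - nR * (cp G w : ℝ))
        = (A*r) * (∑ w, (G.degree w : ℝ)) - nR * (∑ w, ((cp G w : ℕ) : ℝ)) := by
      rw [Finset.sum_sub_distrib, ← Finset.mul_sum, ← Finset.mul_sum]
    have hAr : (0:ℝ) ≤ A*r := by positivity
    have : (A*r) * (nR^2 - nR - ((np G : ℕ) : ℝ))
        - nR * (((np G : ℕ) : ℝ) * ((G.cliqueNum : ℝ) - 1))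
        ≤ ∑ w, ((A*r) * (G.degree w : ℝ) - nR * (cp G w : ℝ)) := by
      rw [hsplit, hdeg_sum]
      have := mul_le_mul_of_nonneg_left hcp_sum hnR.le
      linarith
    linarith [hsum_le]
  -- the induced subgraph on the neighborhood of v
  have hdlt : G.degree v < N := by rw [← hcard]; exact G.degree_lt_card_verts v
  have hcard' : Fintype.card ↥(G.neighborSet v) = G.degree v :=
    G.card_neighborSet_eq_degree v
  have hIH := IH (G.degree v) hdlt ↥(G.neighborSet v)
    (G.induce (G.neighborSet v)) hcard' (free_induce hfree _)
  rw [np_induce] at hIH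
  have hr1sq : Real.sqrt (cp G v) ^ 2 = ((cp G v : ℕ) : ℝ) := Real.sq_sqrt (by positivity)
  set r1 : ℝ := Real.sqrt (cp G v) with hr1def
  have hr1nn : 0 ≤ r1 := Real.sqrt_nonneg _
  have hKstep : ((G.induce (G.neighborSet v)).cliqueNum : ℝ) + 1 ≤ (G.cliqueNum : ℝ) := by
    exact_mod_cast cliqueNum_step G v
  have h1 : (G.degree v : ℝ) - 2*r1 ≤ ((G.induce (G.neighborSet v)).cliqueNum : ℝ) := by
    rcases Nat.eq_zero_or_pos (G.degree v) with hd0 | hdpos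
    · rw [hd0]
      simp only [Nat.cast_zero, zero_sub]
      have : (0:ℝ) ≤ ((G.induce (G.neighborSet v)).cliqueNum : ℝ) := Nat.cast_nonneg _
      linarith
    · have hdR : (0:ℝ) < (G.degree v : ℝ) := by exact_mod_cast hdpos
      nlinarith [hIH, hr1sq, hr1nn, hdR, sq_nonneg r1]
  have h4 : 1 + (G.degree v : ℝ) - 2*r1 ≤ (G.cliqueNum : ℝ) := by linarith
  have hamgm : 2*(nR*(A*r))*r1 ≤ nR^2*((cp G v : ℕ) : ℝ) + (A*r)^2 := by
    nlinarith [sq_nonneg (nR*r1 - A*r), hr1sq]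
  have hnArpos : (0:ℝ) < nR*(A*r) := by positivity
  have step1 : nR*(A*r)*(1 + (G.degree v : ℝ) - 2*r1) ≤ nR*(A*r)*(G.cliqueNum : ℝ) :=
    mul_le_mul_of_nonneg_left h4 hnArpos.le
  have hM : nR*(A*r) + (A*r)*(nR^2 - nR - ((np G : ℕ) : ℝ))
        - nR*(((np G : ℕ) : ℝ)*((G.cliqueNum : ℝ)-1)) - (A*r)^2
      ≤ nR*(A*r)*(G.cliqueNum : ℝ) := by
    nlinarith [step1, hamgm, hfsum]
  have hident : nR*(A*r)*(G.cliqueNum : ℝ)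
        - (nR*(A*r) + (A*r)*(nR^2 - nR - ((np G : ℕ) : ℝ))
          - nR*(((np G : ℕ) : ℝ)*((G.cliqueNum : ℝ)-1)) - (A*r)^2)
      = r*(nR*(nR*(G.cliqueNum : ℝ) - r - A^2)) := by
    rw [hA, ← hr2]
    ring
  have h5 : (0:ℝ) ≤ nR*(G.cliqueNum : ℝ) - r - A^2 := by
    nlinarith [hM, hident, mul_pos hnR hrpos]
  show A ^ 2 ≤ (G.cliqueNum : ℝ) * nR
  nlinarith [h5, hrpos]

end GHS

theorem improved_ghs (n : ℕ) (α : ℝ) (hα : α ∈ Set.Ioo (0 : ℝ) 1)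
    (G : SimpleGraph (Fin n)) [Fintype G.edgeSet]
    (hedges : α * (n.choose 2 : ℝ) ≤ (G.edgeFinset.card : ℝ))
    (hK22 : ¬ HasInducedK22 G) :
    (1 - Real.sqrt (1 - α)) ^ 2 * (n : ℝ) ≤ (G.cliqueNum : ℝ) := by
  classical
  obtain ⟨hα0, hα1⟩ := hα
  rcases Nat.eq_zero_or_pos n with h0 | hn
  · subst h0
    simp only [Nat.cast_zero, mul_zero]
    exact Nat.cast_nonneg _
  · have hkey := GHS.key n (Fin n) G (Fintype.card_fin n) hK22
    have hs2 : Real.sqrt (1 - α) ^ 2 = 1 - α := Real.sq_sqrt (by linarith)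
    set s := Real.sqrt (1 - α) with hsdef
    have hs0 : 0 ≤ s := Real.sqrt_nonneg _
    have hs1 : s < 1 := by nlinarith [hs2, hs0]
    have hnR : (0:ℝ) < (n:ℝ) := by exact_mod_cast hn
    have hn1 : (1:ℝ) ≤ (n:ℝ) := by exact_mod_cast hn
    have hPn : GHS.np G + (∑ w, G.degree w) + n = n * n := by
      have := GHS.np_eq G
      rwa [Fintype.card_fin] at this
    have hinst : (@SimpleGraph.edgeFinset _ G G.fintypeEdgeSet) = G.edgeFinset :=
      congrArg (fun i => @SimpleGraph.edgeFinset _ G i) (Subsingleton.elim _ _)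
    have hdeg2 : ∑ w, G.degree w = 2 * G.edgeFinset.card := by
      rw [SimpleGraph.sum_degrees_eq_twice_card_edges G, hinst]
    have hnpR : ((GHS.np G : ℕ) : ℝ)
        = (n:ℝ)*(n:ℝ) - (n:ℝ) - 2*(G.edgeFinset.card : ℝ) := by
      rw [hdeg2] at hPn
      have h2 : ((GHS.np G + 2 * G.edgeFinset.card + n : ℕ) : ℝ) = ((n * n : ℕ) : ℝ) :=
        by exact_mod_cast congrArg (Nat.cast (R := ℝ)) hPn
      push_cast at h2
      linarith
    have hchoose : ((n.choose 2 : ℕ) : ℝ) = (n:ℝ)*((n:ℝ)-1)/2 := Nat.cast_choose_two (K := ℝ) n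
    have hnp_le : ((GHS.np G : ℕ) : ℝ) ≤ s^2 * (n:ℝ)^2 := by
      rw [hnpR, hs2]
      rw [hchoose] at hedges
      nlinarith [hedges, hnR, hα0.le]
    have hsqrt : Real.sqrt (GHS.np G) ≤ s * (n:ℝ) := by
      have h1 := Real.sqrt_le_sqrt hnp_le
      rwa [show s^2 * (n:ℝ)^2 = (s*(n:ℝ))^2 by ring,
        Real.sqrt_sq (by positivity)] at h1
    have h1 : ((1 - s)*(n:ℝ))^2 ≤ ((n:ℝ) - Real.sqrt (GHS.np G))^2 := by
      have hnn : (0:ℝ) ≤ (1-s)*(n:ℝ) := by nlinarith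
      have hle : (1-s)*(n:ℝ) ≤ (n:ℝ) - Real.sqrt (GHS.np G) := by nlinarith [hsqrt]
      exact pow_le_pow_left₀ hnn hle 2
    nlinarith [hkey, h1, hnR]
end

section
/- Fix integers m ≥ k ≥ 2, an integer i ≥ 2, and c ∈ (0,1). There exists n₀ (depending only on c, i, and k) such that for all n ≥ n₀ the following holds. Let H = (V, E) be a k-uniform hypergraph on n vertices with ω(H) ≤ (c/2)·n which does not contain a complete m-tuple of missing edges. Then for every family F_i ⊆ C(V,i) with |F_i| ≥ c·C(n,i), there exist a family F_{i−1} ⊆ C(V,i−1) and a missing edge τ of H such that (1) |F_{i−1}| ≥ (c/(12km))^k · C(n,i−1), and (2) σ ∪ {t} ∈ F_i for all σ ∈ F_{i−1} and all t ∈ τ. -/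
open Finset
open scoped Classical

/-- `S` is a clique in the `k`-uniform hypergraph with edge set `E`:
every `k`-element subset of `S` is an edge. -/
def IsHClique {V : Type*} [DecidableEq V] (E : Finset (Finset V)) (k : ℕ)
    (S : Finset V) : Prop :=
  ∀ t : Finset V, t ⊆ S → t.card = k → t ∈ E

/-- `τ` is a missing edge of the `k`-uniform hypergraph with edge set `E`. -/
def IsMissing {V : Type*} [DecidableEq V] (E : Finset (Finset V)) (k : ℕ)
    (τ : Finset V) : Prop :=
  τ.card = k ∧ τ ∉ E

/-- The clique number `ω(H)`: the maximum number of vertices of a clique. -/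
noncomputable def hOmega (V : Type*) [Fintype V] [DecidableEq V]
    (E : Finset (Finset V)) (k : ℕ) : ℕ :=
  Finset.sup ((Finset.univ : Finset V).powerset.filter fun S => IsHClique E k S)
    Finset.card

/-- `c_m(H)`: the number of `m`-element vertex subsets that are cliques. -/
noncomputable def cliqueCount (V : Type*) [Fintype V] [DecidableEq V]
    (E : Finset (Finset V)) (k m : ℕ) : ℕ :=
  (((Finset.univ : Finset V).powersetCard m).filter fun S => IsHClique E k S).card

/-- The number of missing edges contained in `S`. -/
noncomputable def missingIn {V : Type*} [DecidableEq V] (E : Finset (Finset V))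
    (k : ℕ) (S : Finset V) : ℕ :=
  ((S.powersetCard k).filter fun t => t ∉ E).card

/-- `H` contains a complete `m`-tuple of missing edges: pairwise disjoint missing
edges `τ 0, …, τ (m-1)` such that every transversal `{t 0, …, t (m-1)}` is a clique. -/
def HasCompleteTuple {V : Type*} [DecidableEq V] (E : Finset (Finset V))
    (k m : ℕ) : Prop :=
  ∃ τ : Fin m → Finset V,
    (∀ i, IsMissing E k (τ i)) ∧
    (∀ i j, i ≠ j → Disjoint (τ i) (τ j)) ∧
    ∀ t : Fin m → V, (∀ i, t i ∈ τ i) →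
      IsHClique E k (Finset.image t Finset.univ)

/-- The extended binomial coefficient `B(x, k)`. -/
noncomputable def extBinom (x : ℝ) (k : ℕ) : ℝ :=
  if (k : ℝ) - 1 ≤ x then (∏ i ∈ Finset.range k, (x - (i : ℝ))) / (Nat.factorial k) else 0

set_option linter.unusedSectionVars false

section Aux
variable {V : Type*} [Fintype V] [DecidableEq V]

lemma exists_missing_of_large {E : Finset (Finset V)} {k : ℕ} {S : Finset V}
    (h : hOmega V E k < S.card) : ∃ ρ : Finset V, ρ ⊆ S ∧ ρ.card = k ∧ ρ ∉ E := by
  by_contra hcon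
  push_neg at hcon
  have hclique : IsHClique E k S := fun t ht hc => hcon t ht hc
  have hmem : S ∈ ((Finset.univ : Finset V).powerset.filter fun T => IsHClique E k T) := by
    simp [Finset.mem_filter, Finset.mem_powerset, hclique]
  have := Finset.le_sup (f := Finset.card) hmem
  exact absurd this (by rw [← hOmega]; omega)

lemma greedy {E : Finset (Finset V)} {k : ℕ} (hk : 1 ≤ k) :
    ∀ (t : ℕ) (S : Finset V), hOmega V E k + k * t ≤ S.card →
      ∃ D : Finset (Finset V), D.card = t ∧ (∀ ρ ∈ D, ρ ⊆ S ∧ ρ.card = k ∧ ρ ∉ E) ∧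
        ∀ ρ ∈ D, ∀ ρ' ∈ D, ρ ≠ ρ' → Disjoint ρ ρ' := by
  intro t
  induction t with
  | zero => exact fun S _ => ⟨∅, by simp, by simp, by simp⟩
  | succ t ih =>
    intro S hS
    have hks : 1 ≤ k * (t + 1) := Nat.one_le_iff_ne_zero.mpr (by positivity)
    obtain ⟨ρ, hρS, hρc, hρE⟩ := exists_missing_of_large (E := E) (k := k) (S := S) (by omega)
    have hcards : (S \ ρ).card = S.card - k := by rw [Finset.card_sdiff_of_subset hρS, hρc]
    have hle : hOmega V E k + k * t ≤ (S \ ρ).card := by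
      rw [hcards]
      have : k * (t + 1) = k * t + k := by ring
      omega
    obtain ⟨D', hD'c, hD'mem, hD'dis⟩ := ih (S \ ρ) hle
    have hρne : ρ.Nonempty := Finset.card_pos.mp (by omega)
    have hρnotD' : ρ ∉ D' := by
      intro hmem
      obtain ⟨v, hv⟩ := hρne
      have := (hD'mem ρ hmem).1 hv
      simp [Finset.mem_sdiff, hv] at this
    have hdisρ : ∀ ρ' ∈ D', Disjoint ρ ρ' := by
      intro ρ' hρ'
      rw [Finset.disjoint_left]
      intro a ha ha'
      have := (hD'mem ρ' hρ').1 ha'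
      simp [Finset.mem_sdiff, ha] at this
    refine ⟨insert ρ D', ?_, ?_, ?_⟩
    · rw [Finset.card_insert_of_notMem hρnotD', hD'c]
    · intro σ hσ
      rcases Finset.mem_insert.mp hσ with h | h
      · exact h ▸ ⟨hρS, hρc, hρE⟩
      · exact ⟨(hD'mem σ h).1.trans (Finset.sdiff_subset), (hD'mem σ h).2.1, (hD'mem σ h).2.2⟩
    · intro σ hσ σ' hσ' hne
      rcases Finset.mem_insert.mp hσ with h | h <;> rcases Finset.mem_insert.mp hσ' with h' | h'
      · exact absurd (h.trans h'.symm) hne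
      · exact h ▸ hdisρ σ' h'
      · exact h' ▸ (hdisρ σ h).symm
      · exact hD'dis σ h σ' h' hne

end Aux

section Aux
variable {V : Type*} [Fintype V] [DecidableEq V]

lemma tuple_missing {E : Finset (Finset V)} {k m : ℕ}
    (hnot : ¬ HasCompleteTuple E k m) (A : Finset (Finset V)) (hAcard : A.card = m)
    (hAmem : ∀ ρ ∈ A, ρ.card = k ∧ ρ ∉ E)
    (hAdis : ∀ ρ ∈ A, ∀ ρ' ∈ A, ρ ≠ ρ' → Disjoint ρ ρ') :
    ∃ ρ : Finset V, ρ.card = k ∧ ρ ∉ E ∧ (∀ v ∈ ρ, ∃ τ' ∈ A, v ∈ τ') ∧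
      (A.filter fun τ' => ¬ Disjoint τ' ρ).card = k := by
  set τ : Fin m → Finset V := fun j => (A.equivFin.symm (Fin.cast hAcard.symm j) : Finset V) with hτ
  have hτA : ∀ j, τ j ∈ A := fun j => (A.equivFin.symm (Fin.cast hAcard.symm j)).2
  have hτinj : Function.Injective τ := by
    intro a b hab
    have h1 : A.equivFin.symm (Fin.cast hAcard.symm a) = A.equivFin.symm (Fin.cast hAcard.symm b) :=
      Subtype.ext hab
    have h2 := A.equivFin.symm.injective h1
    exact Fin.cast_injective _ h2
  have h3 : ¬ ∀ t : Fin m → V, (∀ j, t j ∈ τ j) →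
      IsHClique E k (Finset.image t Finset.univ) := by
    intro h3
    exact hnot ⟨τ, fun j => ⟨(hAmem _ (hτA j)).1, (hAmem _ (hτA j)).2⟩,
      fun a b hab => hAdis _ (hτA a) _ (hτA b) (fun he => hab (hτinj he)), h3⟩
  push_neg at h3
  obtain ⟨t, ht, hnc⟩ := h3
  rw [IsHClique] at hnc
  push_neg at hnc
  obtain ⟨ρ, hρsub, hρcard, hρE⟩ := hnc
  have hmem : ∀ v ∈ ρ, ∃ j : Fin m, t j = v := by
    intro v hv
    have := hρsub hv
    simpa using this
  choose jf hjf using hmem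
  have hcardeq : ρ.card = (A.filter fun τ' => ¬ Disjoint τ' ρ).card := by
    apply Finset.card_bij (fun v hv => τ (jf v hv))
    · intro v hv
      rw [Finset.mem_filter]
      refine ⟨hτA _, ?_⟩
      rw [Finset.not_disjoint_iff]
      have hh := ht (jf v hv)
      rw [hjf v hv] at hh
      exact ⟨v, hh, hv⟩
    · intro a ha b hb heq
      have := hτinj heq
      rw [← hjf a ha, ← hjf b hb, this]
    · intro b hb
      rw [Finset.mem_filter] at hb
      obtain ⟨hbA, hbd⟩ := hb
      rw [Finset.not_disjoint_iff] at hbd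
      obtain ⟨v, hvb, hvρ⟩ := hbd
      refine ⟨v, hvρ, ?_⟩
      by_contra hne
      have hdisj := hAdis _ (hτA (jf v hvρ)) _ hbA hne
      have hvτ : v ∈ τ (jf v hvρ) := by
        have hh := ht (jf v hvρ); rwa [hjf v hvρ] at hh
      exact Finset.disjoint_left.mp hdisj hvτ hvb
  refine ⟨ρ, hρcard, hρE, fun v hv => ⟨τ (jf v hv), hτA _, ?_⟩, by rw [← hcardeq]; exact hρcard⟩
  have hh := ht (jf v hv); rwa [hjf v hv] at hh

end Aux

lemma choose_desc_le : ∀ (k t m : ℕ), k ≤ m → m ≤ t →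
    (t - k).choose (m - k) * (t - k + 1) ^ k ≤ t.choose m * m ^ k := by
  intro k
  induction k with
  | zero => intro t m _ _; simp
  | succ k ih =>
    intro t m hkm hmt
    have hkm' : k ≤ m := by omega
    have e1 : t - (k + 1) + 1 = t - k := by omega
    have hid : (t - k) * ((t - (k+1)).choose (m - (k+1))) = (t - k).choose (m - k) * (m - k) := by
      have h1 : t - k = Nat.succ (t - (k+1)) := by omega
      have h2 : m - k = Nat.succ (m - (k+1)) := by omega
      rw [h1, h2, Nat.add_one_mul_choose_eq]
    rw [e1]
    have lhs_eq : (t - (k+1)).choose (m - (k+1)) * (t - k) ^ (k+1) =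
        ((t - k) * ((t - (k+1)).choose (m - (k+1)))) * (t - k) ^ k := by ring
    rw [lhs_eq, hid]
    calc (t - k).choose (m - k) * (m - k) * (t - k) ^ k
        = (t - k).choose (m - k) * ((m - k) * (t - k) ^ k) := by ring
      _ ≤ (t - k).choose (m - k) * (m * (t - k + 1) ^ k) := by
          exact Nat.mul_le_mul_left _ (Nat.mul_le_mul (by omega) (Nat.pow_le_pow_left (by omega) k))
      _ = ((t - k).choose (m - k) * (t - k + 1) ^ k) * m := by ring
      _ ≤ (t.choose m * m ^ k) * m := Nat.mul_le_mul_right _ (ih t m hkm' hmt)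
      _ = t.choose m * m ^ (k+1) := by ring

noncomputable def pickMiss {V : Type*} [DecidableEq V] (E : Finset (Finset V)) (k : ℕ)
    (A : Finset (Finset V)) : Finset V :=
  if h : ∃ ρ : Finset V, ρ.card = k ∧ ρ ∉ E ∧ (∀ v ∈ ρ, ∃ τ' ∈ A, v ∈ τ') ∧
      (A.filter fun τ' => ¬ Disjoint τ' ρ).card = k then h.choose else ∅

lemma pickMiss_spec {V : Type*} [DecidableEq V] {E : Finset (Finset V)} {k : ℕ}
    {A : Finset (Finset V)}
    (h : ∃ ρ : Finset V, ρ.card = k ∧ ρ ∉ E ∧ (∀ v ∈ ρ, ∃ τ' ∈ A, v ∈ τ') ∧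
      (A.filter fun τ' => ¬ Disjoint τ' ρ).card = k) :
    (pickMiss E k A).card = k ∧ pickMiss E k A ∉ E ∧
      (∀ v ∈ pickMiss E k A, ∃ τ' ∈ A, v ∈ τ') ∧
      (A.filter fun τ' => ¬ Disjoint τ' (pickMiss E k A)).card = k := by
  rw [pickMiss, dif_pos h]
  exact h.choose_spec

lemma key_count {V : Type*} [Fintype V] [DecidableEq V] {E : Finset (Finset V)} {k m : ℕ}
    (hk : 1 ≤ k) (hkm : k ≤ m)
    (hnot : ¬ HasCompleteTuple E k m) (S : Finset V)
    (hS : hOmega V E k + k * (m + k) < S.card) :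
    (((S.card - (hOmega V E k + k * (m + k)) : ℕ) : ℝ) / ((k : ℝ) * m)) ^ k
      ≤ (missingIn E k S : ℝ) := by
  set w := hOmega V E k + k * (m + k) with hw
  set u := S.card - w with hu
  set t := (m + k) + u / k with ht
  have hmt : m ≤ t := by
    rw [ht]; exact le_trans (Nat.le_add_right m k) (Nat.le_add_right (m+k) (u/k))
  have hkt : k ≤ t := by
    rw [ht]; exact le_trans (Nat.le_add_left k m) (Nat.le_add_right (m+k) (u/k))
  have htS : hOmega V E k + k * t ≤ S.card := by
    have h2 : hOmega V E k + k * t = w + k * (u / k) := by rw [hw, ht]; ring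
    have h3 : k * (u / k) ≤ u := by rw [mul_comm]; exact Nat.div_mul_le_self u k
    have h4 : w + u = S.card := by omega
    calc hOmega V E k + k * t = w + k * (u / k) := h2
      _ ≤ w + u := Nat.add_le_add_left h3 w
      _ = S.card := h4
  obtain ⟨D, hDc, hDmem, hDdis⟩ := greedy hk t S htS
  -- for every m-subset A of D, pickMiss gives a good missing edge
  have hex : ∀ A ∈ D.powersetCard m, ∃ ρ : Finset V, ρ.card = k ∧ ρ ∉ E ∧
      (∀ v ∈ ρ, ∃ τ' ∈ A, v ∈ τ') ∧ (A.filter fun τ' => ¬ Disjoint τ' ρ).card = k := by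
    intro A hA
    rw [Finset.mem_powersetCard] at hA
    exact tuple_missing hnot A hA.2 (fun ρ hρ => ⟨(hDmem ρ (hA.1 hρ)).2.1, (hDmem ρ (hA.1 hρ)).2.2⟩)
      (fun ρ hρ ρ' hρ' => hDdis ρ (hA.1 hρ) ρ' (hA.1 hρ'))
  have hPF : ∀ A ∈ D.powersetCard m, (pickMiss E k A).card = k ∧ pickMiss E k A ∉ E ∧
      (∀ v ∈ pickMiss E k A, ∃ τ' ∈ A, v ∈ τ') ∧
      (A.filter fun τ' => ¬ Disjoint τ' (pickMiss E k A)).card = k :=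
    fun A hA => pickMiss_spec (hex A hA)
  set I := (D.powersetCard m).image (pickMiss E k) with hI
  have hIsub : I ⊆ (S.powersetCard k).filter fun x => x ∉ E := by
    intro ρ hρ
    rw [hI, Finset.mem_image] at hρ
    obtain ⟨A, hA, hAρ⟩ := hρ
    obtain ⟨hc, hE, hin, _⟩ := hPF A hA
    rw [hAρ] at hc hE hin
    rw [Finset.mem_filter, Finset.mem_powersetCard]
    refine ⟨⟨?_, hc⟩, hE⟩
    intro v hv
    obtain ⟨τ', hτ'A, hvτ'⟩ := hin v hv
    exact (hDmem τ' ((Finset.mem_powersetCard.mp hA).1 hτ'A)).1 hvτ'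
  -- fiber bound
  have hfib : ∀ ρ ∈ I, ((D.powersetCard m).filter fun A => pickMiss E k A = ρ).card
      ≤ (t - k).choose (m - k) := by
    intro ρ hρI
    set fib := (D.powersetCard m).filter fun A => pickMiss E k A = ρ with hfibdef
    rcases fib.eq_empty_or_nonempty with he | ⟨A₀, hA₀⟩
    · rw [he]; simp
    set B := D.filter fun τ' => ¬ Disjoint τ' ρ with hB
    have hBA : ∀ A ∈ fib, B ⊆ A ∧ B.card = k := by
      intro A hA
      rw [hfibdef, Finset.mem_filter] at hA
      obtain ⟨hA1, hA2⟩ := hA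
      have hP := hPF A hA1
      rw [hA2] at hP
      have hAD : A ⊆ D := (Finset.mem_powersetCard.mp hA1).1
      have hBeq : B = A.filter fun τ' => ¬ Disjoint τ' ρ := by
        ext τ'
        simp only [hB, Finset.mem_filter]
        constructor
        · rintro ⟨hτD, hnd⟩
          obtain ⟨v, hvτ', hvρ⟩ := Finset.not_disjoint_iff.mp hnd
          obtain ⟨τ'', hτ''A, hvτ''⟩ := hP.2.2.1 v hvρ
          have : τ' = τ'' := by
            by_contra hne
            exact Finset.disjoint_left.mp (hDdis τ' hτD τ'' (hAD hτ''A) hne) hvτ' hvτ''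
          exact ⟨this ▸ hτ''A, hnd⟩
        · rintro ⟨hτA, hnd⟩
          exact ⟨hAD hτA, hnd⟩
      constructor
      · rw [hBeq]; exact Finset.filter_subset _ _
      · rw [hBeq]; exact hP.2.2.2
    have hBk : B.card = k := (hBA A₀ hA₀).2
    have hBD : B ⊆ D := Finset.filter_subset _ _
    have hmap : ∀ A ∈ fib, A \ B ∈ (D \ B).powersetCard (m - k) := by
      intro A hA
      have hAsub := (hBA A hA).1
      rw [hfibdef, Finset.mem_filter] at hA
      have hAD : A ⊆ D := (Finset.mem_powersetCard.mp hA.1).1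
      have hAm : A.card = m := (Finset.mem_powersetCard.mp hA.1).2
      rw [Finset.mem_powersetCard]
      constructor
      · exact Finset.sdiff_subset_sdiff hAD (Finset.Subset.refl B)
      · rw [Finset.card_sdiff_of_subset hAsub, hAm, hBk]
    have hinj : Set.InjOn (fun A => A \ B) fib := by
      intro A₁ h₁ A₂ h₂ heq
      have e₁ := Finset.sdiff_union_of_subset (hBA A₁ (by exact h₁)).1
      have e₂ := Finset.sdiff_union_of_subset (hBA A₂ (by exact h₂)).1
      simp only at heq
      rw [← e₁, ← e₂, heq]
    calc fib.card ≤ ((D \ B).powersetCard (m - k)).card :=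
          Finset.card_le_card_of_injOn _ hmap hinj
      _ = (t - k).choose (m - k) := by
          rw [Finset.card_powersetCard, Finset.card_sdiff_of_subset hBD, hDc, hBk]
  -- main count
  have hmain : t.choose m ≤ (t - k).choose (m - k) * I.card := by
    have h1 : (D.powersetCard m).card = t.choose m := by
      rw [Finset.card_powersetCard, hDc]
    rw [← h1]
    rw [Finset.card_eq_sum_card_fiberwise (f := pickMiss E k) (t := I)
      (fun A hA => Finset.mem_image_of_mem _ hA)]
    calc ∑ ρ ∈ I, ((D.powersetCard m).filter fun A => pickMiss E k A = ρ).card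
        ≤ ∑ _ρ ∈ I, (t - k).choose (m - k) := Finset.sum_le_sum hfib
      _ = I.card * ((t - k).choose (m - k)) := by rw [Finset.sum_const, smul_eq_mul]
      _ = (t - k).choose (m - k) * I.card := by ring
  have hchoosepos : 0 < (t - k).choose (m - k) := Nat.choose_pos (by omega)
  have hnat : (t - k + 1) ^ k ≤ I.card * m ^ k := by
    have h2 := choose_desc_le k t m hkm hmt
    have h3 : (t - k).choose (m - k) * (t - k + 1) ^ k ≤
        (t - k).choose (m - k) * (I.card * m ^ k) := by
      calc (t - k).choose (m - k) * (t - k + 1) ^ k ≤ t.choose m * m ^ k := h2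
        _ ≤ ((t - k).choose (m - k) * I.card) * m ^ k := Nat.mul_le_mul_right _ hmain
        _ = (t - k).choose (m - k) * (I.card * m ^ k) := by ring
    exact Nat.le_of_mul_le_mul_left h3 hchoosepos
  -- pass to reals
  have hm1 : 1 ≤ m := le_trans hk hkm
  have hmpos : (0:ℝ) < (m:ℝ) := by exact_mod_cast hm1
  have hkposR : (0:ℝ) < (k:ℝ) := by exact_mod_cast hk
  have htk : t - k = m + u / k := by
    rw [ht]; omega
  have hc1 : ((u:ℝ)/(k:ℝ)) ≤ ((t - k + 1 : ℕ) : ℝ) := by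
    have hmod := Nat.div_add_mod u k
    have hmodlt : u % k < k := Nat.mod_lt u (by omega)
    have hult : u < k * (u / k + 1) := by
      have : k * (u / k + 1) = k * (u / k) + k := by ring
      omega
    have hR : (u:ℝ) < (k:ℝ) * ((u / k : ℕ) + 1) := by exact_mod_cast hult
    have h1 : (u:ℝ)/(k:ℝ) < ((u / k : ℕ) : ℝ) + 1 := by
      rw [div_lt_iff₀ hkposR]
      calc (u:ℝ) < (k:ℝ) * ((u / k : ℕ) + 1) := hR
        _ = (((u / k : ℕ) : ℝ) + 1) * k := by ring
    have h2 : ((u / k : ℕ) : ℝ) + 1 ≤ ((t - k + 1 : ℕ) : ℝ) := by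
      have : u / k + 1 ≤ t - k + 1 := by rw [htk]; omega
      exact_mod_cast this
    linarith
  have hnatR : (((t - k + 1 : ℕ) : ℝ)) ^ k ≤ (I.card : ℝ) * ((m:ℝ)) ^ k := by
    exact_mod_cast hnat
  have hIR : (((u:ℝ)) / ((k:ℝ) * (m:ℝ))) ^ k ≤ (I.card : ℝ) := by
    have e1 : ((u:ℝ)) / ((k:ℝ) * (m:ℝ)) = ((u:ℝ)/(k:ℝ)) / (m:ℝ) := by
      field_simp
    have h3 : ((u:ℝ)/(k:ℝ)) / (m:ℝ) ≤ ((t - k + 1 : ℕ) : ℝ) / (m:ℝ) := by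
      gcongr
    have h4 : (((t - k + 1 : ℕ) : ℝ) / (m:ℝ)) ^ k ≤ (I.card : ℝ) := by
      rw [div_pow, div_le_iff₀ (by positivity)]
      exact hnatR
    calc (((u:ℝ)) / ((k:ℝ) * (m:ℝ))) ^ k = (((u:ℝ)/(k:ℝ)) / (m:ℝ)) ^ k := by rw [e1]
      _ ≤ (((t - k + 1 : ℕ) : ℝ) / (m:ℝ)) ^ k := by
          apply pow_le_pow_left₀ (by positivity) h3
      _ ≤ (I.card : ℝ) := h4
  have hfinal : (I.card : ℝ) ≤ (missingIn E k S : ℝ) := by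
    rw [missingIn]
    exact_mod_cast Finset.card_le_card hIsub
  calc (((u : ℕ) : ℝ) / ((k : ℝ) * m)) ^ k ≤ (I.card : ℝ) := hIR
    _ ≤ (missingIn E k S : ℝ) := hfinal

set_option maxHeartbeats 2000000 in
theorem iterated_step (k m i : ℕ) (hk : 2 ≤ k) (hkm : k ≤ m) (hi : 2 ≤ i)
    (c : ℝ) (hc : c ∈ Set.Ioo (0 : ℝ) 1) :
    ∃ n₀ : ℕ, ∀ n : ℕ, n₀ ≤ n →
      ∀ E : Finset (Finset (Fin n)),
        (∀ e ∈ E, e.card = k) →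
        (hOmega (Fin n) E k : ℝ) ≤ (c / 2) * (n : ℝ) →
        ¬ HasCompleteTuple E k m →
        ∀ Fi : Finset (Finset (Fin n)),
          (∀ σ ∈ Fi, σ.card = i) →
          c * (n.choose i : ℝ) ≤ (Fi.card : ℝ) →
          ∃ (Fi' : Finset (Finset (Fin n))) (τ : Finset (Fin n)),
            (∀ σ ∈ Fi', σ.card = i - 1) ∧
            IsMissing E k τ ∧
            (c / (12 * (k : ℝ) * (m : ℝ))) ^ k * (n.choose (i - 1) : ℝ) ≤ (Fi'.card : ℝ) ∧
            ∀ σ ∈ Fi', ∀ t ∈ τ, insert t σ ∈ Fi := by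
  obtain ⟨hc0, hc1⟩ := hc
  obtain ⟨k', rfl⟩ : ∃ k', k = k' + 1 := ⟨k - 1, by omega⟩
  obtain ⟨i', rfl⟩ : ∃ i', i = i' + 1 := ⟨i - 1, by omega⟩
  set K := k' + 1 with hK
  set A := i' + 1 + K * (m + K) with hA
  set B := ⌈1/c⌉₊ + 1 with hB
  refine ⟨10 * A * B, ?_⟩
  intro n hn E hE hω hnot Fi hFi1 hFi2
  simp only [Nat.add_sub_cancel]
  clear_value K A B
  -- basic numeric facts
  have hm1 : 1 ≤ m := by omega
  have hAn : A ≤ n := by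
    have h1 : A * 1 ≤ A * (10 * B) := Nat.mul_le_mul_left A (by omega)
    have h2 : A * (10 * B) = 10 * A * B := by ring
    omega
  have hi'n : i' + 1 ≤ n := by
    have hKA : K * (m + K) ≥ 0 := Nat.zero_le _
    omega
  have hKn : K ≤ n := by
    have : K * 1 ≤ K * (m + K) := Nat.mul_le_mul_left K (by omega)
    omega
  have hnpos : 0 < n := by omega
  have hcn : 10 * ((i' : ℝ) + 1 + (K : ℝ) * ((m : ℝ) + K)) ≤ c * n := by
    have hBc : 1 ≤ c * (B : ℝ) := by
      have hceil : (1/c : ℝ) ≤ (⌈1/c⌉₊ : ℝ) := Nat.le_ceil _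
      have hBR : (1/c : ℝ) ≤ (B : ℝ) := by
        rw [hB]; push_cast; linarith
      calc (1:ℝ) = c * (1/c) := by field_simp
        _ ≤ c * B := by apply mul_le_mul_of_nonneg_left hBR hc0.le
    have hnR : (10 * A * B : ℝ) ≤ (n : ℝ) := by exact_mod_cast hn
    have hAR : ((A : ℕ) : ℝ) = (i' : ℝ) + 1 + (K : ℝ) * ((m : ℝ) + K) := by
      rw [hA]; push_cast; ring
    have h1 : c * (10 * A * B : ℝ) ≤ c * n := mul_le_mul_of_nonneg_left hnR hc0.le
    have h2 : (10 * (A:ℝ)) * (c * B) ≤ c * ((10 * A * B : ℕ) : ℝ) := by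
      push_cast; ring_nf; nlinarith [hc0.le]
    have h3 : 10 * (A:ℝ) ≤ (10 * (A:ℝ)) * (c * B) := by
      nlinarith [hBc, (by positivity : (0:ℝ) ≤ 10 * (A:ℝ))]
    calc 10 * ((i' : ℝ) + 1 + (K : ℝ) * ((m : ℝ) + K)) = 10 * (A:ℝ) := by rw [hAR]
      _ ≤ (10 * (A:ℝ)) * (c * B) := h3
      _ ≤ c * ((10 * A * B : ℕ) : ℝ) := h2
      _ ≤ c * n := by
          apply mul_le_mul_of_nonneg_left _ hc0.le
          exact_mod_cast hn
  -- setup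
  set w := hOmega (Fin n) E K + K * (m + K) with hw
  set P := (Finset.univ : Finset (Fin n)).powersetCard i' with hPdef
  set L : Finset (Fin n) → Finset (Fin n) :=
    fun σ => Finset.univ.filter (fun v => v ∉ σ ∧ insert v σ ∈ Fi) with hL
  set N := P.card with hN
  have hNP : N = n.choose i' := by
    rw [hN, hPdef, Finset.card_powersetCard, Finset.card_univ, Fintype.card_fin]
  have hNpos : (0:ℝ) < (N:ℝ) := by
    rw [hNP]; exact_mod_cast Nat.choose_pos (by omega)
  clear_value w P L N
  set Δ : ℝ := c * ((n - i' : ℕ) : ℝ) - (w : ℝ) with hΔdef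
  clear_value Δ
  have hwR : (w : ℝ) = (hOmega (Fin n) E K : ℝ) + (K:ℝ) * ((m:ℝ) + K) := by
    rw [hw]; push_cast; ring
  have hΔ : (2*c/5) * n ≤ Δ := by
    rw [hΔdef, hwR]
    have hsub : ((n - i' : ℕ) : ℝ) = (n : ℝ) - i' := by
      rw [Nat.cast_sub (by omega)]
    rw [hsub]
    have hi'c : c * (i':ℝ) ≤ (i':ℝ) + 1 := by nlinarith [hc1, (by positivity : (0:ℝ) ≤ (i':ℝ))]
    have hexp : c * ((n:ℝ) - (i':ℝ)) = c * n - c * (i':ℝ) := by ring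
    linarith [hω, hcn, hi'c]
  have hΔpos : 0 < Δ := by
    have : (0:ℝ) < (2*c/5) * n := by positivity
    linarith
  -- counting: sum of link sizes
  have hLcard : ∀ σ ∈ P, (L σ).card = (Fi.filter fun ρ => σ ⊆ ρ).card := by
    intro σ hσ
    have hσc : σ.card = i' := (Finset.mem_powersetCard.mp (hPdef ▸ hσ)).2
    apply Finset.card_bij (fun v _ => insert v σ)
    · intro v hv
      rw [hL, Finset.mem_filter] at hv
      rw [Finset.mem_filter]
      exact ⟨hv.2.2, Finset.subset_insert _ _⟩
    · intro a₁ h₁ a₂ h₂ he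
      rw [hL, Finset.mem_filter] at h₁ h₂
      have : a₁ ∈ insert a₂ σ := by rw [← he]; exact Finset.mem_insert_self _ _
      rcases Finset.mem_insert.mp this with h | h
      · exact h
      · exact absurd h h₁.2.1
    · intro ρ hρ
      rw [Finset.mem_filter] at hρ
      obtain ⟨hρFi, hσρ⟩ := hρ
      have hρc : ρ.card = i' + 1 := hFi1 ρ hρFi
      have hd : (ρ \ σ).card = 1 := by
        rw [Finset.card_sdiff_of_subset hσρ, hρc, hσc]; omega
      obtain ⟨v, hv⟩ := Finset.card_eq_one.mp hd
      have hvmem : v ∈ ρ \ σ := by rw [hv]; exact Finset.mem_singleton_self v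
      rw [Finset.mem_sdiff] at hvmem
      have hins : insert v σ = ρ := by
        have hu : σ ∪ ρ \ σ = ρ := Finset.union_sdiff_of_subset hσρ
        rw [hv] at hu
        rw [Finset.insert_eq, Finset.union_comm]
        exact hu
      refine ⟨v, ?_, hins⟩
      rw [hL, Finset.mem_filter]
      exact ⟨Finset.mem_univ v, hvmem.2, by rw [hins]; exact hρFi⟩
  have hsum : ∑ σ ∈ P, (L σ).card = Fi.card * (i' + 1) := by
    calc ∑ σ ∈ P, (L σ).card = ∑ σ ∈ P, (Fi.filter fun ρ => σ ⊆ ρ).card :=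
          Finset.sum_congr rfl hLcard
      _ = ∑ σ ∈ P, ∑ ρ ∈ Fi, if σ ⊆ ρ then 1 else 0 := by
          apply Finset.sum_congr rfl; intro σ _; rw [Finset.card_filter]
      _ = ∑ ρ ∈ Fi, ∑ σ ∈ P, if σ ⊆ ρ then 1 else 0 := Finset.sum_comm
      _ = ∑ ρ ∈ Fi, (P.filter fun σ => σ ⊆ ρ).card := by
          apply Finset.sum_congr rfl; intro ρ _; rw [Finset.card_filter]
      _ = ∑ ρ ∈ Fi, (i' + 1) := by
          apply Finset.sum_congr rfl
          intro ρ hρ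
          have he : P.filter (fun σ => σ ⊆ ρ) = ρ.powersetCard i' := by
            ext σ
            rw [Finset.mem_filter, hPdef, Finset.mem_powersetCard, Finset.mem_powersetCard]
            constructor
            · rintro ⟨⟨_, h2⟩, h3⟩; exact ⟨h3, h2⟩
            · rintro ⟨h3, h2⟩; exact ⟨⟨Finset.subset_univ σ, h2⟩, h3⟩
          rw [he, Finset.card_powersetCard, hFi1 ρ hρ, Nat.choose_succ_self_right]
      _ = Fi.card * (i' + 1) := by rw [Finset.sum_const, smul_eq_mul]
  -- the missing edges and degree double count
  set Miss := ((Finset.univ : Finset (Fin n)).powersetCard K).filter (fun t => t ∉ E) with hMiss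
  have hswap : ∑ σ ∈ P, missingIn E K (L σ)
      = ∑ τ ∈ Miss, (P.filter fun σ => τ ⊆ L σ).card := by
    have h1 : ∀ σ ∈ P, missingIn E K (L σ) = (Miss.filter fun τ => τ ⊆ L σ).card := by
      intro σ _
      rw [missingIn]
      congr 1
      ext τ
      rw [Finset.mem_filter, Finset.mem_powersetCard, hMiss, Finset.mem_filter,
        Finset.mem_filter, Finset.mem_powersetCard]
      constructor
      · rintro ⟨⟨hsub, hcard⟩, hE'⟩; exact ⟨⟨⟨Finset.subset_univ τ, hcard⟩, hE'⟩, hsub⟩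
      · rintro ⟨⟨⟨_, hcard⟩, hE'⟩, hsub⟩; exact ⟨⟨hsub, hcard⟩, hE'⟩
    calc ∑ σ ∈ P, missingIn E K (L σ) = ∑ σ ∈ P, (Miss.filter fun τ => τ ⊆ L σ).card :=
          Finset.sum_congr rfl h1
      _ = ∑ σ ∈ P, ∑ τ ∈ Miss, if τ ⊆ L σ then 1 else 0 := by
          apply Finset.sum_congr rfl; intro σ _; rw [Finset.card_filter]
      _ = ∑ τ ∈ Miss, ∑ σ ∈ P, if τ ⊆ L σ then 1 else 0 := Finset.sum_comm
      _ = ∑ τ ∈ Miss, (P.filter fun σ => τ ⊆ L σ).card := by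
          apply Finset.sum_congr rfl; intro τ _; rw [Finset.card_filter]
  -- real analysis chain
  set g : Finset (Fin n) → ℝ := fun σ => (((L σ).card - w : ℕ) : ℝ) with hg
  clear_value g
  have hg0 : ∀ σ ∈ P, 0 ≤ g σ := fun σ _ => by
    simp only [hg]; exact Nat.cast_nonneg _
  have hKmR : (0:ℝ) < ((K:ℕ):ℝ) * (m:ℝ) := by positivity
  have hstepA : ∀ σ ∈ P, (g σ / (((K:ℕ):ℝ) * m)) ^ K ≤ (missingIn E K (L σ) : ℝ) := by
    intro σ hσ
    by_cases hcase : w < (L σ).card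
    · rw [hw] at hcase
      simp only [hg]
      rw [hw]
      exact key_count (by omega) hkm hnot (L σ) hcase
    · have hz : (L σ).card - w = 0 := by omega
      simp only [hg, hz, Nat.cast_zero, zero_div, zero_pow (by omega : K ≠ 0)]
      positivity
  have hgsum : (N:ℝ) * Δ ≤ ∑ σ ∈ P, g σ := by
    have h1 : ∀ σ ∈ P, ((L σ).card : ℝ) - w ≤ g σ := by
      intro σ _
      rcases le_or_gt (w:ℕ) ((L σ).card) with h | h
      · simp only [hg]; rw [Nat.cast_sub h]
      · have h0 : (L σ).card - w = 0 := by omega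
        simp only [hg, h0, Nat.cast_zero]
        have : ((L σ).card : ℝ) < (w:ℝ) := by exact_mod_cast h
        linarith
    have h2 : ∑ σ ∈ P, (((L σ).card : ℝ) - w) ≤ ∑ σ ∈ P, g σ := Finset.sum_le_sum h1
    have h3 : ∑ σ ∈ P, (((L σ).card : ℝ) - w) = (Fi.card : ℝ) * (i' + 1) - N * w := by
      rw [Finset.sum_sub_distrib, Finset.sum_const, ← hN]
      have : ∑ σ ∈ P, ((L σ).card : ℝ) = ((∑ σ ∈ P, (L σ).card : ℕ) : ℝ) := by push_cast; rfl
      rw [this, hsum]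
      push_cast
      ring
    have h4 : c * ((n.choose (i'+1) : ℝ) * (i' + 1)) ≤ (Fi.card : ℝ) * (i' + 1) := by
      have := mul_le_mul_of_nonneg_right hFi2 (by positivity : (0:ℝ) ≤ (i':ℝ) + 1)
      calc c * ((n.choose (i'+1) : ℝ) * (i' + 1)) = c * (n.choose (i'+1) : ℝ) * ((i':ℝ) + 1) := by ring
        _ ≤ (Fi.card : ℝ) * ((i':ℝ) + 1) := this
    have h5 : (n.choose (i'+1) : ℝ) * ((i':ℝ) + 1) = (N : ℝ) * ((n - i' : ℕ) : ℝ) := by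
      rw [hNP]
      exact_mod_cast congrArg (Nat.cast : ℕ → ℝ) (Nat.choose_succ_right_eq n i')
    have h6 : (N:ℝ) * Δ = c * ((N : ℝ) * ((n - i' : ℕ) : ℝ)) - N * w := by
      rw [hΔdef]; ring
    rw [h6]
    have h7 : c * ((N : ℝ) * ((n - i' : ℕ) : ℝ)) = c * ((n.choose (i'+1) : ℝ) * (i' + 1)) := by
      rw [h5]
    rw [h7]
    linarith
  have hpow := pow_sum_div_card_le_sum_pow (s := P) (f := g) hg0 k'
  have hsum2 : (N : ℝ) * (Δ / (((K:ℕ):ℝ) * m)) ^ K ≤ ∑ σ ∈ P, (missingIn E K (L σ) : ℝ) := by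
    have e1 : (N:ℝ) * (Δ / (((K:ℕ):ℝ) * m)) ^ K
        = ((N:ℝ) * Δ) ^ K / ((N:ℝ)^k' * ((((K:ℕ):ℝ)) * m) ^ K) := by
      have hNk0 : (N:ℝ)^k' ≠ 0 := by positivity
      calc (N:ℝ) * (Δ / (((K:ℕ):ℝ) * m)) ^ K
          = (N:ℝ) * (Δ^K / ((((K:ℕ):ℝ)) * m)^K) := by rw [div_pow]
        _ = ((N:ℝ) * Δ^K) / ((((K:ℕ):ℝ)) * m)^K := by rw [mul_div_assoc]
        _ = ((N:ℝ)^k' * ((N:ℝ) * Δ^K)) / ((N:ℝ)^k' * ((((K:ℕ):ℝ)) * m)^K) :=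
            (mul_div_mul_left _ _ hNk0).symm
        _ = ((N:ℝ) * Δ) ^ K / ((N:ℝ)^k' * ((((K:ℕ):ℝ)) * m) ^ K) := by
            rw [mul_pow]
            congr 1
            rw [hK, pow_succ]
            ring
    have e2 : ((N:ℝ) * Δ) ^ K ≤ (∑ σ ∈ P, g σ) ^ K :=
      pow_le_pow_left₀ (by positivity) hgsum K
    have e3 : (∑ σ ∈ P, g σ) ^ K / ((N:ℝ)^k') ≤ ∑ σ ∈ P, g σ ^ K := by
      have hPcard : ((P.card : ℝ)) = (N:ℝ) := by rw [hN]
      calc (∑ σ ∈ P, g σ) ^ K / ((N:ℝ)^k') = (∑ σ ∈ P, g σ) ^ (k'+1) / ((P.card:ℝ))^k' := by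
            rw [hPcard, hK]
        _ ≤ ∑ σ ∈ P, g σ ^ (k'+1) := hpow
        _ = ∑ σ ∈ P, g σ ^ K := by rw [hK]
    calc (N:ℝ) * (Δ / (((K:ℕ):ℝ) * m)) ^ K
        = ((N:ℝ) * Δ) ^ K / ((N:ℝ)^k' * ((((K:ℕ):ℝ)) * m) ^ K) := e1
      _ ≤ (∑ σ ∈ P, g σ) ^ K / ((N:ℝ)^k' * ((((K:ℕ):ℝ)) * m) ^ K) := by
          apply (div_le_div_iff_of_pos_right (by positivity)).mpr e2
      _ = ((∑ σ ∈ P, g σ) ^ K / ((N:ℝ)^k')) / (((((K:ℕ):ℝ)) * m) ^ K) := by ring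
      _ ≤ (∑ σ ∈ P, g σ ^ K) / (((((K:ℕ):ℝ)) * m) ^ K) := by
          apply (div_le_div_iff_of_pos_right (by positivity)).mpr e3
      _ = ∑ σ ∈ P, g σ ^ K / (((((K:ℕ):ℝ)) * m) ^ K) := by rw [Finset.sum_div]
      _ = ∑ σ ∈ P, (g σ / ((((K:ℕ):ℝ)) * m)) ^ K := by
          apply Finset.sum_congr rfl; intro σ _; rw [div_pow]
      _ ≤ ∑ σ ∈ P, (missingIn E K (L σ) : ℝ) := Finset.sum_le_sum hstepA
  -- pigeonhole over missing edges
  have hswapR : ∑ τ ∈ Miss, ((P.filter fun σ => τ ⊆ L σ).card : ℝ)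
      = ∑ σ ∈ P, (missingIn E K (L σ) : ℝ) := by exact_mod_cast hswap.symm
  have hMissCard : Miss.card ≤ n.choose K := by
    calc Miss.card ≤ ((Finset.univ : Finset (Fin n)).powersetCard K).card := by
          rw [hMiss]; exact Finset.card_filter_le _ _
      _ = n.choose K := by rw [Finset.card_powersetCard, Finset.card_univ, Fintype.card_fin]
  have hchpos : (0:ℝ) < (n.choose K : ℝ) := by exact_mod_cast Nat.choose_pos hKn
  have hposKm : (0:ℝ) < (Δ / (((K:ℕ):ℝ) * m)) ^ K := pow_pos (div_pos hΔpos hKmR) K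
  set b : ℝ := (N:ℝ) * (Δ / (((K:ℕ):ℝ) * m)) ^ K / (n.choose K : ℝ) with hb
  have hbpos : 0 < b := by
    rw [hb]; exact div_pos (mul_pos hNpos hposKm) hchpos
  have hEx : ∃ τ ∈ Miss, b ≤ ((P.filter fun σ => τ ⊆ L σ).card : ℝ) := by
    by_contra hcon
    push_neg at hcon
    have hMne : Miss.Nonempty := by
      rcases Miss.eq_empty_or_nonempty with he | h
      · exfalso
        rw [he, Finset.sum_empty] at hswapR
        have h0 := hsum2
        rw [← hswapR] at h0
        exact absurd h0 (not_le.mpr (mul_pos hNpos hposKm))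
      · exact h
    have hlt : ∑ τ ∈ Miss, ((P.filter fun σ => τ ⊆ L σ).card : ℝ) < ∑ _τ ∈ Miss, b :=
      Finset.sum_lt_sum_of_nonempty hMne hcon
    rw [Finset.sum_const, nsmul_eq_mul] at hlt
    have h2 : (Miss.card : ℝ) * b ≤ (n.choose K : ℝ) * b :=
      mul_le_mul_of_nonneg_right (by exact_mod_cast hMissCard) hbpos.le
    have h3 : (n.choose K : ℝ) * b = (N:ℝ) * (Δ / (((K:ℕ):ℝ) * m)) ^ K := by
      rw [hb, mul_comm ((n.choose K : ℕ) : ℝ), div_mul_cancel₀ _ (ne_of_gt hchpos)]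
    rw [hswapR] at hlt
    linarith [hsum2]
  obtain ⟨τ, hτMiss, hτdeg⟩ := hEx
  have hτm : τ.card = K ∧ τ ∉ E := by
    rw [hMiss, Finset.mem_filter, Finset.mem_powersetCard] at hτMiss
    exact ⟨hτMiss.1.2, hτMiss.2⟩
  refine ⟨P.filter (fun σ => τ ⊆ L σ), τ, ?_, ⟨hτm.1, hτm.2⟩, ?_, ?_⟩
  · intro σ hσ
    have hσP := (Finset.mem_filter.mp hσ).1
    rw [hPdef, Finset.mem_powersetCard] at hσP
    exact hσP.2
  · have h1 : (c / (12 * ((K:ℕ):ℝ) * m)) ^ K * (n.choose K : ℝ)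
        ≤ (Δ / (((K:ℕ):ℝ) * m)) ^ K := by
      have hch : (n.choose K : ℝ) ≤ ((n:ℝ))^K := by exact_mod_cast Nat.choose_le_pow n K
      have hcnn : (0:ℝ) ≤ c * n := by positivity
      have h25 : c * (n:ℝ) / 12 ≤ Δ := by linarith [hΔ]
      have h2 : c * (n:ℝ) / (12 * ((K:ℕ):ℝ) * m) ≤ Δ / (((K:ℕ):ℝ) * m) := by
        rw [div_le_div_iff₀ (by positivity) (by positivity)]
        nlinarith [mul_le_mul_of_nonneg_right h25
          (le_of_lt (by positivity : (0:ℝ) < 12 * ((K:ℕ):ℝ) * m)), hKmR.le]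
      calc (c / (12 * ((K:ℕ):ℝ) * m)) ^ K * (n.choose K : ℝ)
          ≤ (c / (12 * ((K:ℕ):ℝ) * m)) ^ K * ((n:ℝ))^K := by
            apply mul_le_mul_of_nonneg_left hch (by positivity)
        _ = (c * n / (12 * ((K:ℕ):ℝ) * m)) ^ K := by rw [← mul_pow]; congr 1; ring
        _ ≤ (Δ / (((K:ℕ):ℝ) * m)) ^ K := pow_le_pow_left₀ (by positivity) h2 K
    have h3 : (c / (12 * ((K:ℕ):ℝ) * m)) ^ K * (N:ℝ) ≤ b := by
      rw [hb, le_div_iff₀ hchpos]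
      calc (c / (12 * ((K:ℕ):ℝ) * m)) ^ K * (N:ℝ) * (n.choose K : ℝ)
          = (N:ℝ) * ((c / (12 * ((K:ℕ):ℝ) * m)) ^ K * (n.choose K : ℝ)) := by ring
        _ ≤ (N:ℝ) * (Δ / (((K:ℕ):ℝ) * m)) ^ K := mul_le_mul_of_nonneg_left h1 hNpos.le
    have h4 : ((n.choose i' : ℕ) : ℝ) = (N:ℝ) := by rw [hNP]
    rw [h4]
    linarith [hτdeg, h3]
  · intro σ hσ t ht
    have hσ2 := Finset.mem_filter.mp hσ
    have hmem := hσ2.2 ht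
    rw [hL, Finset.mem_filter] at hmem
    exact hmem.2.2
end

section
/- For any integers m ≥ k ≥ 2 and any ε ∈ (0,1), there exists δ > 0 (depending on ε, k, m) such that for all sufficiently large n the following holds: if H is a k-uniform hypergraph on n vertices that does not contain a complete m-tuple of missing edges and ω(H) ≤ (1−ε)·n, then c_m(H) ≤ (1−δ)·C(n,m). -/
open Finset
open scoped Classical

lemma card_le_hOmega {n : ℕ} {E : Finset (Finset (Fin n))} {k : ℕ} {S : Finset (Fin n)}
    (hS : IsHClique E k S) : S.card ≤ hOmega (Fin n) E k :=
  Finset.le_sup (by simp [Finset.mem_filter, hS])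

lemma exists_disjoint_missing {n k : ℕ} (E : Finset (Finset (Fin n))) :
    ∀ j : ℕ, hOmega (Fin n) E k + j * k < n →
      ∃ τ : Fin (j + 1) → Finset (Fin n), (∀ i, IsMissing E k (τ i)) ∧
        ∀ i i', i ≠ i' → Disjoint (τ i) (τ i') := by
  intro j
  induction j with
  | zero =>
    intro h
    have hnc : ¬ IsHClique E k (Finset.univ : Finset (Fin n)) := by
      intro hc
      have := card_le_hOmega hc
      simp only [Finset.card_univ, Fintype.card_fin] at this
      omega
    unfold IsHClique at hnc
    push_neg at hnc
    obtain ⟨t, _, htk, htE⟩ := hnc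
    exact ⟨fun _ => t, fun _ => ⟨htk, htE⟩,
      fun i i' hne => absurd (by omega : i = i') hne⟩
  | succ j ih =>
    intro h
    have hjk : j * k ≤ (j + 1) * k := Nat.mul_le_mul_right k (Nat.le_succ j)
    obtain ⟨τ, hm, hd⟩ := ih (by omega)
    set U := Finset.univ.biUnion τ with hUdef
    have hUcard : U.card ≤ (j + 1) * k := by
      refine le_trans Finset.card_biUnion_le ?_
      have hc : ∀ i ∈ (Finset.univ : Finset (Fin (j + 1))), (τ i).card = k :=
        fun i _ => (hm i).1
      rw [Finset.sum_congr rfl hc, Finset.sum_const, Finset.card_univ,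
        Fintype.card_fin, smul_eq_mul]
    set R := (Finset.univ : Finset (Fin n)) \ U with hRdef
    have hRcard : n - (j + 1) * k ≤ R.card := by
      rw [hRdef, Finset.card_sdiff_of_subset (Finset.subset_univ U), Finset.card_univ,
        Fintype.card_fin]
      omega
    have hnc : ¬ IsHClique E k R := by
      intro hc
      have := card_le_hOmega hc
      omega
    unfold IsHClique at hnc
    push_neg at hnc
    obtain ⟨t, htR, htk, htE⟩ := hnc
    have hdt : ∀ i, Disjoint t (τ i) := by
      intro i
      rw [Finset.disjoint_left]
      intro a hat hai
      have haU : a ∈ U := Finset.mem_biUnion.mpr ⟨i, Finset.mem_univ _, hai⟩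
      have := htR hat
      rw [hRdef, Finset.mem_sdiff] at this
      exact this.2 haU
    refine ⟨Fin.cons t τ, ?_, ?_⟩
    · intro i
      induction i using Fin.cases with
      | zero => simpa using ⟨htk, htE⟩
      | succ i0 => simpa using hm i0
    · intro i
      induction i using Fin.cases with
      | zero =>
        intro i' hne
        induction i' using Fin.cases with
        | zero => exact absurd rfl hne
        | succ i1 => simpa using hdt i1
      | succ i0 =>
        intro i' hne
        induction i' using Fin.cases with
        | zero => simpa using (hdt i0).symm
        | succ i1 =>
          simp only [Fin.cons_succ]
          exact hd i0 i1 (fun hh => hne (by rw [hh]))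

set_option maxHeartbeats 1000000 in
theorem few_cliques_of_small_omega (k m : ℕ) (hk : 2 ≤ k) (hkm : k ≤ m)
    (ε : ℝ) (hε : ε ∈ Set.Ioo (0 : ℝ) 1) :
    ∃ δ : ℝ, 0 < δ ∧
      ∃ n₀ : ℕ, ∀ n : ℕ, n₀ ≤ n →
        ∀ E : Finset (Finset (Fin n)),
          (∀ e ∈ E, e.card = k) →
          ¬ HasCompleteTuple E k m →
          (hOmega (Fin n) E k : ℝ) ≤ (1 - ε) * (n : ℝ) →
          (cliqueCount (Fin n) E k m : ℝ) ≤ (1 - δ) * (n.choose m : ℝ) := by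
  obtain ⟨hε0, hε1⟩ := hε
  have hm1 : 1 ≤ m := le_trans (by norm_num) (le_trans hk hkm)
  have hk0 : (0 : ℝ) < k := by
    have : (2 : ℝ) ≤ k := by exact_mod_cast hk
    linarith
  refine ⟨(ε / (2 * k)) ^ m, by positivity, ⌈(2 * k * m : ℝ) / ε⌉₊ + 1, ?_⟩
  intro n hn E _ hno hω
  have hn0 : 0 < n := lt_of_lt_of_le (Nat.succ_pos _) hn
  have hn0' : (0 : ℝ) < n := by exact_mod_cast hn0
  have hn' : (2 * k * m : ℝ) / ε ≤ n := by
    refine le_trans (Nat.le_ceil _) ?_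
    exact_mod_cast Nat.le_of_succ_le hn
  have hεn : 2 * k * m ≤ ε * n := by
    rw [div_le_iff₀ hε0] at hn'
    linarith
  have hm0' : (0 : ℝ) < m := by exact_mod_cast hm1
  have hxm : (m : ℝ) ≤ ε * n / (2 * k) := by
    rw [le_div_iff₀ (by positivity)]
    linarith
  set r := ⌈ε * n / k⌉₊ with hrdef
  have hxpos : (0 : ℝ) < ε * n / k := by positivity
  have hr1 : 1 ≤ r := Nat.ceil_pos.mpr hxpos
  have hrlow : ε * n / k ≤ (r : ℝ) := Nat.le_ceil _
  have hrhigh : (r : ℝ) < ε * n / k + 1 := Nat.ceil_lt_add_one (le_of_lt hxpos)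
  have hcond : hOmega (Fin n) E k + (r - 1) * k < n := by
    have hc1 : ((r - 1 : ℕ) : ℝ) = (r : ℝ) - 1 := by
      rw [Nat.cast_sub hr1]; simp
    have h2 : ((r - 1 : ℕ) : ℝ) * k < ε * n := by
      rw [hc1]
      calc ((r : ℝ) - 1) * k < (ε * n / k) * k :=
            mul_lt_mul_of_pos_right (by linarith) hk0
        _ = ε * n := div_mul_cancel₀ _ (ne_of_gt hk0)
    have hreal : (hOmega (Fin n) E k : ℝ) + ((r - 1 : ℕ) : ℝ) * (k : ℝ) < (n : ℝ) := by
      nlinarith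
    exact_mod_cast hreal
  obtain ⟨τ, hmiss, hdisj⟩ := exists_disjoint_missing E (r - 1) hcond
  have hsr : r - 1 + 1 = r := Nat.succ_pred_eq_of_pos hr1
  have hslow : ε * n / k ≤ ((r - 1 + 1 : ℕ) : ℝ) := by rw [hsr]; exact hrlow
  have hms : (m : ℕ) ≤ r - 1 + 1 := by
    have : (m : ℝ) ≤ ((r - 1 + 1 : ℕ) : ℝ) := by
      have h2x : ε * n / k = 2 * (ε * n / (2 * k)) := by field_simp
      linarith [hxm, hslow]
    exact_mod_cast this
  set N := ((Finset.univ : Finset (Fin n)).powersetCard m).filter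
    (fun S => ¬ IsHClique E k S) with hNdef
  -- key: every m-subset of the disjoint missing family yields a distinct non-clique
  have key : ∀ I : Finset (Fin (r - 1 + 1)), ∃ T : Finset (Fin n), I.card = m →
      (T ∈ N ∧ ∀ j' : Fin (r - 1 + 1), (j' ∈ I ↔ ∃ v ∈ T, v ∈ τ j')) := by
    intro I
    by_cases hIcard : I.card = m
    swap
    · exact ⟨∅, fun h => absurd h hIcard⟩
    set e := I.orderIsoOfFin hIcard with hedef
    have hτ' : ∀ i : Fin m, IsMissing E k (τ (e i)) := fun i => hmiss _
    have hed : ∀ i i' : Fin m, i ≠ i' → Disjoint (τ (e i)) (τ (e i')) := by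
      intro i i' hne
      exact hdisj _ _ (fun hh => hne (e.injective (Subtype.ext hh)))
    have hnc : ¬ ∀ t : Fin m → Fin n, (∀ i, t i ∈ τ (e i)) →
        IsHClique E k (Finset.image t Finset.univ) := by
      intro hall
      exact hno ⟨fun i => τ (e i), hτ', hed, hall⟩
    push_neg at hnc
    obtain ⟨t, ht, htnc⟩ := hnc
    have htinj : Function.Injective t := by
      intro i i' hii
      by_contra hne
      exact Finset.disjoint_left.mp (hed i i' hne) (ht i)
        (by rw [hii]; exact ht i')
    refine ⟨Finset.image t Finset.univ, fun _ => ⟨?_, ?_⟩⟩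
    · rw [hNdef, Finset.mem_filter, Finset.mem_powersetCard]
      refine ⟨⟨Finset.subset_univ _, ?_⟩, htnc⟩
      rw [Finset.card_image_of_injective _ htinj, Finset.card_univ, Fintype.card_fin]
    · intro j'
      constructor
      · intro hj'
        obtain ⟨i, hi⟩ := e.surjective ⟨j', hj'⟩
        refine ⟨t i, Finset.mem_image_of_mem _ (Finset.mem_univ _), ?_⟩
        have : ((e i : {x // x ∈ I}) : Fin (r - 1 + 1)) = j' := by rw [hi]
        rw [← this]
        exact ht i
      · rintro ⟨v, hvT, hvj⟩
        rw [Finset.mem_image] at hvT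
        obtain ⟨i, -, rfl⟩ := hvT
        by_contra hj'
        have hne : ((e i : {x // x ∈ I}) : Fin (r - 1 + 1)) ≠ j' := by
          intro hh
          exact hj' (hh ▸ (e i).2)
        exact Finset.disjoint_left.mp (hdisj _ _ hne) (ht i) hvj
  choose F hF using key
  have hcount : (r - 1 + 1).choose m ≤ N.card := by
    have hmap : ∀ I ∈ ((Finset.univ : Finset (Fin (r - 1 + 1))).powersetCard m), F I ∈ N := by
      intro I hI
      rw [Finset.mem_powersetCard] at hI
      exact (hF I hI.2).1
    have hinj : Set.InjOn F ((Finset.univ : Finset (Fin (r - 1 + 1))).powersetCard m) := by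
      intro I hI I' hI' hFF
      rw [Finset.mem_coe, Finset.mem_powersetCard] at hI hI'
      ext j'
      rw [(hF I hI.2).2 j', (hF I' hI'.2).2 j', hFF]
    have := Finset.card_le_card_of_injOn F hmap hinj
    rwa [Finset.card_powersetCard, Finset.card_univ, Fintype.card_fin] at this
  have htot : cliqueCount (Fin n) E k m + N.card = n.choose m := by
    rw [hNdef, cliqueCount, Finset.card_filter_add_card_filter_not,
      Finset.card_powersetCard, Finset.card_univ, Fintype.card_fin]
  -- numeric comparison
  have hfac : (0 : ℝ) < (m.factorial : ℝ) := by exact_mod_cast m.factorial_pos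
  have hA : ((r - 1 + 1).descFactorial m : ℝ) = (m.factorial : ℝ) * ((r - 1 + 1).choose m : ℝ) := by
    exact_mod_cast Nat.descFactorial_eq_factorial_mul_choose (r - 1 + 1) m
  have hA' : (n.descFactorial m : ℝ) = (m.factorial : ℝ) * (n.choose m : ℝ) := by
    exact_mod_cast Nat.descFactorial_eq_factorial_mul_choose n m
  have hB : (((r - 1 + 1) + 1 - m) ^ m : ℕ) ≤ (r - 1 + 1).descFactorial m := Nat.pow_sub_le_descFactorial (r - 1 + 1) m
  have hC : n.descFactorial m ≤ n ^ m := Nat.descFactorial_le_pow n m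
  have hcast : (((r - 1 + 1) + 1 - m : ℕ) : ℝ) = ((r - 1 + 1 : ℕ) : ℝ) + 1 - m := by
    rw [Nat.cast_sub (by omega)]; push_cast; ring
  have hx : ε * n / (2 * k) ≤ (((r - 1 + 1) + 1 - m : ℕ) : ℝ) := by
    rw [hcast]
    have h2x : ε * n / k = 2 * (ε * n / (2 * k)) := by field_simp
    linarith [hxm, hslow]
  have hsmall : (ε / (2 * k)) ^ m * (n.choose m : ℝ) ≤ ((r - 1 + 1).choose m : ℝ) := by
    have hchain : ((ε / (2 * k)) ^ m * (n.choose m : ℝ)) * (m.factorial : ℝ) ≤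
        ((r - 1 + 1).choose m : ℝ) * (m.factorial : ℝ) := by
      have e1 : ((ε / (2 * k)) ^ m * (n.choose m : ℝ)) * (m.factorial : ℝ) =
          (ε / (2 * k)) ^ m * ((m.factorial : ℝ) * (n.choose m : ℝ)) := by ring
      rw [e1, ← hA']
      calc (ε / (2 * k)) ^ m * (n.descFactorial m : ℝ)
          ≤ (ε / (2 * k)) ^ m * ((n ^ m : ℕ) : ℝ) := by
            apply mul_le_mul_of_nonneg_left (by exact_mod_cast hC) (by positivity)
        _ = (ε / (2 * k) * n) ^ m := by push_cast; rw [mul_pow]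
        _ ≤ ((((r - 1 + 1) + 1 - m : ℕ) : ℝ)) ^ m := by
            apply pow_le_pow_left₀ (by positivity)
            rw [show ε / (2 * k) * n = ε * n / (2 * k) by ring]
            exact hx
        _ ≤ ((r - 1 + 1).descFactorial m : ℝ) := by exact_mod_cast hB
        _ = ((r - 1 + 1).choose m : ℝ) * (m.factorial : ℝ) := by rw [hA]; ring
    exact le_of_mul_le_mul_right hchain hfac
  have heq : (cliqueCount (Fin n) E k m : ℝ) = (n.choose m : ℝ) - (N.card : ℝ) := by
    have : ((cliqueCount (Fin n) E k m + N.card : ℕ) : ℝ) = (n.choose m : ℝ) := by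
      exact_mod_cast congrArg (Nat.cast : ℕ → ℝ) htot
    push_cast at this
    linarith
  have hNge : ((r - 1 + 1).choose m : ℝ) ≤ (N.card : ℝ) := by exact_mod_cast hcount
  rw [heq]
  nlinarith [hsmall, hNge]
end

section
/- (Fractional Helly theorem) For every integer d ≥ 1 and every α ∈ (0,1), there exists β = β(α, d) ∈ (0,1) with the following property: if F is a family of n > d+1 convex sets in ℝ^d such that at least α·C(n, d+1) of the (d+1)-element subfamilies of F have nonempty intersection, then there are at least β·n members of F whose common intersection is nonempty. -/
open Finset
open scoped Classical

lemma minpt_unique {E : Type*} [NormedAddCommGroup E] [InnerProductSpace ℝ E]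
    {s : Set E} (hs : Convex ℝ s) {x y : E} (hx : x ∈ s) (hy : y ∈ s)
    (hmx : ∀ z ∈ s, ‖x‖ ≤ ‖z‖) (hmy : ∀ z ∈ s, ‖y‖ ≤ ‖z‖) : x = y := by
  have hxy : ‖x‖ = ‖y‖ := le_antisymm (hmx y hy) (hmy x hx)
  have hm : (1/2 : ℝ) • x + (1/2 : ℝ) • y ∈ s :=
    hs hx hy (by norm_num) (by norm_num) (by norm_num)
  have h1 : ‖x‖ ≤ ‖(1/2 : ℝ) • x + (1/2 : ℝ) • y‖ := hmx _ hm
  have h2 : ‖(1/2 : ℝ) • x + (1/2 : ℝ) • y‖ = (1/2 : ℝ) * ‖x + y‖ := by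
    rw [← smul_add, norm_smul]; norm_num
  have h4 : 2 * ‖x‖ ≤ ‖x + y‖ := by rw [h2] at h1; linarith
  have h5 : (2 * ‖x‖) * (2 * ‖x‖) ≤ ‖x + y‖ * ‖x + y‖ :=
    mul_self_le_mul_self (by positivity) h4
  have hp := parallelogram_law_with_norm ℝ x y
  have hxy2 : ‖x‖ * ‖x‖ = ‖y‖ * ‖y‖ := by rw [hxy]
  have h3 : ‖x - y‖ * ‖x - y‖ ≤ 0 := by nlinarith
  have h6 : ‖x - y‖ = 0 := by nlinarith [norm_nonneg (x - y)]
  exact sub_eq_zero.mp (norm_eq_zero.mp h6)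

lemma key_step {d n : ℕ} {C : Fin n → Set (EuclideanSpace ℝ (Fin d))}
    (hconv : ∀ i, Convex ℝ (C i)) {D : Finset (Fin n)} (hD : D.card = d + 1)
    {x : EuclideanSpace ℝ (Fin d)} (hx : x ∈ ⋂ i ∈ D, C i)
    (hmin : ∀ y ∈ ⋂ i ∈ D, C i, ‖x‖ ≤ ‖y‖) :
    ∃ j ∈ D, ∀ y ∈ ⋂ i ∈ D.erase j, C i, ‖x‖ ≤ ‖y‖ := by
  by_contra hcon
  push_neg at hcon
  have hcon' : ∀ j : {j // j ∈ D}, ∃ y, y ∈ (⋂ i ∈ D.erase j.1, C i) ∧ ‖y‖ < ‖x‖ := by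
    intro j
    obtain ⟨y, hy1, hy2⟩ := hcon j.1 j.2
    exact ⟨y, hy1, hy2⟩
  choose y hymem hylt using hcon'
  set f : Option {j // j ∈ D} → EuclideanSpace ℝ (Fin d) :=
    fun o => o.elim x y with hf
  have hdep : ¬ AffineIndependent ℝ f := by
    intro h
    have hcard := h.card_le_finrank_succ
    rw [Fintype.card_option, Fintype.card_coe, hD] at hcard
    have hfr : Module.finrank ℝ (vectorSpan ℝ (Set.range f)) ≤ d := by
      refine le_trans (Submodule.finrank_le _) ?_
      rw [finrank_euclideanSpace_fin]
    omega
  obtain ⟨I, p, hpI, hpIc⟩ := Convex.radon_partition hdep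
  have main : ∀ A : Set (Option {j // j ∈ D}), none ∉ A →
      p ∈ convexHull ℝ (f '' A) → p ∈ convexHull ℝ (f '' Aᶜ) → False := by
    intro A hnA hpA hpAc
    have hball : p ∈ Metric.ball (0 : EuclideanSpace ℝ (Fin d)) ‖x‖ := by
      refine convexHull_min ?_ (convex_ball _ _) hpA
      rintro _ ⟨o, ho, rfl⟩
      match o with
      | none => exact absurd ho hnA
      | some j => simpa [hf] using hylt j
    have hpnorm : ‖p‖ < ‖x‖ := by simpa using hball
    have hpC : p ∈ ⋂ i ∈ D, C i := by
      simp only [Set.mem_iInter]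
      intro i hi
      have hsub : ∀ (S : Set (Option {j // j ∈ D})), (some ⟨i, hi⟩) ∉ S →
          f '' S ⊆ C i := by
        rintro S hiS _ ⟨o, ho, rfl⟩
        match o with
        | none =>
          simp only [Set.mem_iInter] at hx
          exact hx i hi
        | some j =>
          have hij : i ∈ D.erase j.1 := by
            refine Finset.mem_erase.mpr ⟨?_, hi⟩
            rintro rfl
            exact hiS (by simpa using ho)
          have hmem := hymem j
          simp only [Set.mem_iInter] at hmem
          exact hmem i hij
      by_cases hs : some ⟨i, hi⟩ ∈ A
      · exact convexHull_min (hsub Aᶜ (by simp [hs])) (hconv i) hpAc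
      · exact convexHull_min (hsub A hs) (hconv i) hpA
    exact absurd (hmin p hpC) (not_le.mpr hpnorm)
  by_cases hn : none ∈ I
  · exact (main Iᶜ (by simpa using hn) hpIc (by rwa [compl_compl])).elim
  · exact (main I hn hpI hpIc).elim

theorem fractional_helly (d : ℕ) (hd : 1 ≤ d) (α : ℝ) (hα : α ∈ Set.Ioo (0 : ℝ) 1) :
    ∃ β : ℝ, β ∈ Set.Ioo (0 : ℝ) 1 ∧
      ∀ n : ℕ, d + 1 < n →
        ∀ F : Fin n → Set (EuclideanSpace ℝ (Fin d)),
          (∀ i, Convex ℝ (F i)) →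
          α * (n.choose (d + 1) : ℝ) ≤
            ((((Finset.univ : Finset (Fin n)).powersetCard (d + 1)).filter
              fun I => (⋂ i ∈ I, F i).Nonempty).card : ℝ) →
          ∃ I : Finset (Fin n), β * (n : ℝ) ≤ (I.card : ℝ) ∧ (⋂ i ∈ I, F i).Nonempty := by
  obtain ⟨hα0, hα1⟩ := hα
  have hd1 : (1 : ℝ) ≤ 2 * (d + 1) := by
    have h0 : (0 : ℝ) ≤ (d : ℝ) := Nat.cast_nonneg d
    have : (1 : ℝ) ≤ (d : ℝ) + 1 := by linarith
    linarith
  refine ⟨α / (2 * (d + 1)), ⟨by positivity, ?_⟩, ?_⟩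
  · rw [div_lt_one (by positivity)]
    linarith
  intro n hn F hFconv hcount
  set G := (((Finset.univ : Finset (Fin n)).powersetCard (d + 1)).filter
      fun I => (⋂ i ∈ I, F i).Nonempty) with hGdef
  have hDmem : ∀ D ∈ G, D.card = d + 1 ∧ (⋂ i ∈ D, F i).Nonempty := by
    intro D hD
    rw [hGdef, Finset.mem_filter, Finset.mem_powersetCard] at hD
    exact ⟨hD.1.2, hD.2⟩
  have hchpos : 0 < (n.choose (d + 1) : ℝ) := by
    exact_mod_cast Nat.choose_pos (le_of_lt hn)
  have hGpos : (0 : ℝ) < G.card := lt_of_lt_of_le (mul_pos hα0 hchpos) hcount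
  -- witness points
  set wfun : Finset (Fin n) → EuclideanSpace ℝ (Fin d) :=
    fun D => if h : (⋂ i ∈ D, F i).Nonempty then h.some else 0 with hwdef
  have hwfun : ∀ D ∈ G, wfun D ∈ ⋂ i ∈ D, F i := by
    intro D hD
    have h := (hDmem D hD).2
    simp only [hwdef, dif_pos h]
    exact h.some_mem
  -- compact convex subsets
  set C : Fin n → Set (EuclideanSpace ℝ (Fin d)) :=
    fun i => convexHull ℝ (((G.filter (fun D => i ∈ D)).image wfun : Finset _) : Set _)
    with hCdef
  have hCconv : ∀ i, Convex ℝ (C i) := fun i => convex_convexHull ℝ _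
  have hCcomp : ∀ i, IsCompact (C i) := fun i =>
    (Finset.finite_toSet _).isCompact_convexHull (𝕜 := ℝ)
  have hCF : ∀ i, C i ⊆ F i := by
    intro i
    refine convexHull_min ?_ (hFconv i)
    intro z hz
    simp only [Finset.coe_image, Set.mem_image, Finset.mem_coe, Finset.mem_filter] at hz
    obtain ⟨D, ⟨hDG, hiD⟩, rfl⟩ := hz
    have := hwfun D hDG
    simp only [Set.mem_iInter] at this
    exact this i hiD
  have hwC : ∀ D ∈ G, wfun D ∈ ⋂ i ∈ D, C i := by
    intro D hD
    simp only [Set.mem_iInter]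
    intro i hi
    refine subset_convexHull ℝ _ ?_
    simp only [Finset.coe_image, Set.mem_image, Finset.mem_coe, Finset.mem_filter]
    exact ⟨D, ⟨hD, hi⟩, rfl⟩
  have hKconv : ∀ S : Finset (Fin n), Convex ℝ (⋂ i ∈ S, C i) :=
    fun S => convex_iInter fun i => convex_iInter fun _ => hCconv i
  have hKcomp : ∀ S : Finset (Fin n), S.Nonempty → IsCompact (⋂ i ∈ S, C i) := by
    rintro S ⟨i₀, hi₀⟩
    refine IsCompact.of_isClosed_subset (hCcomp i₀)
      (isClosed_biInter fun i _ => (hCcomp i).isClosed) ?_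
    exact Set.biInter_subset_of_mem hi₀
  -- minimal norm points
  have hminex : ∀ D ∈ G, ∃ x ∈ ⋂ i ∈ D, C i, ∀ z ∈ ⋂ i ∈ D, C i, ‖x‖ ≤ ‖z‖ := by
    intro D hD
    have hne : (⋂ i ∈ D, C i).Nonempty := ⟨wfun D, hwC D hD⟩
    have hDne : D.Nonempty := Finset.card_pos.mp (by rw [(hDmem D hD).1]; omega)
    obtain ⟨x, hx, hxmin⟩ := (hKcomp D hDne).exists_isMinOn hne
      (continuous_norm.continuousOn)
    exact ⟨x, hx, fun z hz => hxmin hz⟩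
  choose! x hxmem hxmin using hminex
  have hkey : ∀ D ∈ G, ∃ j ∈ D, ∀ z ∈ ⋂ i ∈ D.erase j, C i, ‖x D‖ ≤ ‖z‖ :=
    fun D hD => key_step hCconv (hDmem D hD).1 (hxmem D hD) (hxmin D hD)
  haveI : Nonempty (Fin n) := ⟨⟨0, by omega⟩⟩
  choose! j hjmem hjmin using hkey
  set φ : Finset (Fin n) → Finset (Fin n) := fun D => D.erase (j D) with hφdef
  set B := (Finset.univ : Finset (Fin n)).powersetCard d with hBdef
  have hmaps : ∀ D ∈ G, φ D ∈ B := by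
    intro D hD
    rw [hBdef, Finset.mem_powersetCard]
    constructor
    · intro a _; exact Finset.mem_univ a
    · rw [hφdef]
      simp only
      rw [Finset.card_erase_of_mem (hjmem D hD), (hDmem D hD).1]
      omega
  have hBcardpos : (0 : ℝ) < B.card := by
    rw [hBdef, Finset.card_powersetCard, Finset.card_univ, Fintype.card_fin]
    exact_mod_cast Nat.choose_pos (by omega)
  -- pigeonhole (real-valued)
  have hsum : G.card = ∑ b ∈ B, (G.filter (fun D => φ D = b)).card :=
    Finset.card_eq_sum_card_fiberwise hmaps
  have hexists : ∃ b ∈ B, (G.card : ℝ) / B.card ≤ ((G.filter (fun D => φ D = b)).card : ℝ) := by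
    by_contra h
    push_neg at h
    have hBne : B.Nonempty := Finset.card_pos.mp (by exact_mod_cast hBcardpos)
    have hlt : ∑ b ∈ B, ((G.filter (fun D => φ D = b)).card : ℝ) <
        ∑ _b ∈ B, (G.card : ℝ) / B.card :=
      Finset.sum_lt_sum_of_nonempty hBne h
    rw [Finset.sum_const, nsmul_eq_mul, mul_div_cancel₀ _ (ne_of_gt hBcardpos)] at hlt
    have : (G.card : ℝ) = ∑ b ∈ B, ((G.filter (fun D => φ D = b)).card : ℝ) := by
      exact_mod_cast hsum
    linarith
  obtain ⟨D', hD'B, hTcard⟩ := hexists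
  set T := G.filter (fun D => φ D = D') with hTdef
  have hTsub : ∀ D ∈ T, D ∈ G ∧ D.erase (j D) = D' := by
    intro D hD
    rw [hTdef, Finset.mem_filter] at hD
    exact hD
  have hTpos : (0 : ℝ) < T.card := lt_of_lt_of_le (div_pos hGpos hBcardpos) hTcard
  obtain ⟨D₀, hD₀T⟩ := Finset.card_pos.mp (by exact_mod_cast hTpos)
  set x₀ := x D₀ with hx₀def
  have hKsub : ∀ D ∈ T, (⋂ i ∈ D, C i) ⊆ ⋂ i ∈ D', C i := by
    intro D hD
    rw [← (hTsub D hD).2]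
    intro z hz
    simp only [Set.mem_iInter] at hz ⊢
    exact fun i hi => hz i (Finset.mem_of_mem_erase hi)
  have hminD' : ∀ D ∈ T, (x D ∈ ⋂ i ∈ D', C i) ∧ ∀ z ∈ ⋂ i ∈ D', C i, ‖x D‖ ≤ ‖z‖ := by
    intro D hD
    obtain ⟨hDG, hDφ⟩ := hTsub D hD
    constructor
    · exact hKsub D hD (hxmem D hDG)
    · intro z hz
      refine hjmin D hDG z ?_
      rwa [hDφ]
  have hxeq : ∀ D ∈ T, x D = x₀ := by
    intro D hD
    exact minpt_unique (hKconv D') (hminD' D hD).1 (hminD' D₀ hD₀T).1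
      (hminD' D hD).2 (hminD' D₀ hD₀T).2
  -- the big set I
  set I : Finset (Fin n) := Finset.univ.filter (fun i => x₀ ∈ C i) with hIdef
  have hIF : (⋂ i ∈ I, F i).Nonempty := by
    refine ⟨x₀, ?_⟩
    simp only [Set.mem_iInter]
    intro i hi
    rw [hIdef, Finset.mem_filter] at hi
    exact hCF i hi.2
  have hDsubI : ∀ D ∈ T, D ⊆ I := by
    intro D hD i hi
    rw [hIdef, Finset.mem_filter]
    refine ⟨Finset.mem_univ i, ?_⟩
    have hx' := hxmem D (hTsub D hD).1
    rw [hxeq D hD] at hx'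
    simp only [Set.mem_iInter] at hx'
    exact hx' i hi
  have hD'card : D'.card = d := by
    rw [hBdef, Finset.mem_powersetCard] at hD'B
    exact hD'B.2
  have hD'subI : D' ⊆ I := by
    intro i hi
    rw [hIdef, Finset.mem_filter]
    refine ⟨Finset.mem_univ i, ?_⟩
    have := (hminD' D₀ hD₀T).1
    simp only [Set.mem_iInter] at this
    exact this i hi
  -- injection from T into I \ D'
  have hsingle : ∀ D ∈ T, ∃ e, D \ D' = {e} := by
    intro D hD
    obtain ⟨hDG, hDφ⟩ := hTsub D hD
    have hsub : D' ⊆ D := by rw [← hDφ]; exact Finset.erase_subset _ _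
    refine Finset.card_eq_one.mp ?_
    rw [Finset.card_sdiff_of_subset hsub, (hDmem D hDG).1, hD'card]
    omega
  choose! e he using hsingle
  have heI : ∀ D ∈ T, e D ∈ I \ D' := by
    intro D hD
    have h1 : e D ∈ D \ D' := by rw [he D hD]; exact Finset.mem_singleton_self _
    rw [Finset.mem_sdiff] at h1
    rw [Finset.mem_sdiff]
    exact ⟨hDsubI D hD h1.1, h1.2⟩
  have hinj : Set.InjOn e T := by
    intro D1 hD1 D2 hD2 hee
    rw [Finset.mem_coe] at hD1 hD2
    have h1 : D1 = D1 \ D' ∪ D' := by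
      rw [Finset.sdiff_union_of_subset]
      rw [← (hTsub D1 hD1).2]; exact Finset.erase_subset _ _
    have h2 : D2 = D2 \ D' ∪ D' := by
      rw [Finset.sdiff_union_of_subset]
      rw [← (hTsub D2 hD2).2]; exact Finset.erase_subset _ _
    rw [h1, h2, he D1 hD1, he D2 hD2, hee]
  have hcard1 : T.card ≤ (I \ D').card :=
    Finset.card_le_card_of_injOn e heI hinj
  have hcard2 : (I \ D').card + D'.card = I.card :=
    Finset.card_sdiff_add_card_eq_card hD'subI
  -- final arithmetic
  refine ⟨I, ?_, hIF⟩
  have hIcard : (d : ℝ) + T.card ≤ I.card := by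
    have := hcard1
    have := hcard2
    have : ((I \ D').card : ℝ) + D'.card = I.card := by exact_mod_cast hcard2
    have h1 : (T.card : ℝ) ≤ ((I \ D').card : ℝ) := by exact_mod_cast hcard1
    rw [hD'card] at hcard2
    have : ((I \ D').card : ℝ) + d = I.card := by exact_mod_cast hcard2
    linarith
  have hid : (n.choose (d + 1) : ℝ) * (d + 1) = (n.choose d : ℝ) * ((n : ℝ) - d) := by
    have h3 := Nat.choose_succ_right_eq n d
    rw [show ((n : ℝ) - d) = ((n - d : ℕ) : ℝ) from (Nat.cast_sub (by omega)).symm]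
    exact_mod_cast h3
  have hBcard : (B.card : ℝ) = (n.choose d : ℝ) := by
    rw [hBdef, Finset.card_powersetCard, Finset.card_univ, Fintype.card_fin]
  -- T.card ≥ α (n - d) / (d+1)
  have hchooseD : (0 : ℝ) < (n.choose d : ℝ) := by
    exact_mod_cast Nat.choose_pos (by omega)
  have hTlb : α * ((n : ℝ) - d) / (d + 1) ≤ (T.card : ℝ) := by
    refine le_trans ?_ hTcard
    rw [hBcard, div_le_div_iff₀ (by positivity) hchooseD]
    calc α * ((n : ℝ) - d) * (n.choose d : ℝ)
        = α * ((n.choose d : ℝ) * ((n : ℝ) - d)) := by ring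
      _ = α * ((n.choose (d + 1) : ℝ) * ((d : ℝ) + 1)) := by rw [hid]
      _ = (α * (n.choose (d + 1) : ℝ)) * ((d : ℝ) + 1) := by ring
      _ ≤ (G.card : ℝ) * ((d : ℝ) + 1) := by
          refine mul_le_mul_of_nonneg_right hcount (by positivity)
  have hnd : (d : ℝ) + 1 < (n : ℝ) := by exact_mod_cast hn
  have hdr : (1 : ℝ) ≤ (d : ℝ) := by exact_mod_cast hd
  rw [div_mul_eq_mul_div, div_le_iff₀ (by positivity)]
  have hT2 : α * ((n : ℝ) - d) / (d + 1) * (2 * ((d : ℝ) + 1)) = 2 * (α * ((n : ℝ) - d)) := by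
    field_simp
  nlinarith [hIcard, hTlb, mul_le_mul_of_nonneg_right hTlb (by positivity : (0:ℝ) ≤ 2 * ((d:ℝ)+1)), hα0.le, mul_pos hα0 (by linarith : (0:ℝ) < (n:ℝ))]
end

section
/- Let F be a finite family of convex sets in ℝ^d, and let H be the (d+1)-uniform hypergraph on vertex set F whose edges are the (d+1)-element subfamilies of F with nonempty intersection. Then H does not contain a complete (d+1)-tuple of missing edges; that is, there do not exist pairwise disjoint (d+1)-element subfamilies τ₁, …, τ_{d+1} ⊆ F, each with empty intersection, such that for every choice K₁ ∈ τ₁, …, K_{d+1} ∈ τ_{d+1} the sets K₁, …, K_{d+1} have nonempty intersection. -/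
open Finset

open Module RealInnerProductSpace in
private lemma helly_core (d : ℕ) (W : Fin (d + 1) → Set (EuclideanSpace ℝ (Fin d)))
    (hW : ∀ j, Convex ℝ (W j)) (x₀ : EuclideanSpace ℝ (Fin d))
    (hx₀ : ∀ j, x₀ ∈ W j)
    (hmin : ∀ y, (∀ j, y ∈ W j) → ‖x₀‖ ≤ ‖y‖)
    (u : Fin (d + 1) → EuclideanSpace ℝ (Fin d))
    (huW : ∀ i j, j ≠ i → u i ∈ W j)
    (hhalf : ∀ i, ⟪x₀, u i⟫ < ‖x₀‖ ^ 2) : False := by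
  classical
  set f : Option (Fin (d + 1)) → EuclideanSpace ℝ (Fin d) := fun o => o.elim x₀ u with hf
  have hdep : ¬ AffineIndependent ℝ f := by
    intro h
    have h1 := h.card_le_finrank_succ
    have h2 : finrank ℝ (vectorSpan ℝ (Set.range f)) ≤ finrank ℝ (EuclideanSpace ℝ (Fin d)) :=
      Submodule.finrank_le _
    rw [finrank_euclideanSpace_fin] at h2
    simp only [Fintype.card_option, Fintype.card_fin] at h1
    omega
  obtain ⟨I, z, hzI, hzIc⟩ := Convex.radon_partition (𝕜 := ℝ) hdep
  -- main argument, assuming `none ∉ I`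
  have main : ∀ (I : Set (Option (Fin (d + 1)))) (z : EuclideanSpace ℝ (Fin d)),
      none ∉ I → z ∈ convexHull ℝ (f '' I) → z ∈ convexHull ℝ (f '' Iᶜ) → False := by
    intro I z hnI hz1 hz2
    have hlin : IsLinearMap ℝ (fun x : EuclideanSpace ℝ (Fin d) => ⟪x₀, x⟫) :=
      ⟨fun a b => inner_add_right _ _ _, fun c x => real_inner_smul_right _ _ _⟩
    have hz_half : ⟪x₀, z⟫ < ‖x₀‖ ^ 2 := by
      have hsub : convexHull ℝ (f '' I) ⊆ {x | ⟪x₀, x⟫ < ‖x₀‖ ^ 2} := by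
        apply convexHull_min _ (convex_halfSpace_lt hlin _)
        rintro x ⟨o, hoI, rfl⟩
        match o with
        | none => exact absurd hoI hnI
        | some i => exact hhalf i
      exact hsub hz1
    have hz_C : ∀ j, z ∈ W j := by
      intro j
      by_cases hj : some j ∈ I
      · refine convexHull_min ?_ (hW j) hz2
        rintro x ⟨o, hoIc, rfl⟩
        match o with
        | none => exact hx₀ j
        | some i =>
          exact huW i j (fun h => hoIc (h ▸ hj))
      · refine convexHull_min ?_ (hW j) hz1
        rintro x ⟨o, hoI, rfl⟩
        match o with
        | none => exact absurd hoI hnI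
        | some i =>
          exact huW i j (fun h => hj (h ▸ hoI))
    -- projection inequality contradiction
    have hzx : z ≠ x₀ := by
      intro h
      rw [h, real_inner_self_eq_norm_sq] at hz_half
      exact lt_irrefl _ hz_half
    set c := ⟪x₀, z⟫ with hc
    set N := ‖z - x₀‖ ^ 2 with hN
    have hNpos : 0 < N := by
      have h' : z - x₀ ≠ 0 := sub_ne_zero.mpr hzx
      rw [hN]
      exact pow_pos (norm_pos_iff.mpr h') 2
    set t := min 1 ((‖x₀‖ ^ 2 - c) / N) with ht
    have ht0 : 0 < t := lt_min one_pos (div_pos (by linarith) hNpos)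
    have ht1 : t ≤ 1 := min_le_left _ _
    have htN : t * N ≤ ‖x₀‖ ^ 2 - c := by
      calc t * N ≤ ((‖x₀‖ ^ 2 - c) / N) * N :=
            mul_le_mul_of_nonneg_right (min_le_right _ _) hNpos.le
        _ = ‖x₀‖ ^ 2 - c := div_mul_cancel₀ _ hNpos.ne'
    have hwmem : x₀ + t • (z - x₀) ∈ ⋂ j, W j := by
      rw [Set.mem_iInter]
      intro j
      have := hW j (hx₀ j) (hz_C j) (a := 1 - t) (b := t) (by linarith) ht0.le (by ring)
      convert this using 1
      module
    have hge : ‖x₀‖ ≤ ‖x₀ + t • (z - x₀)‖ :=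
      hmin _ (Set.mem_iInter.mp hwmem)
    have e1 : ⟪x₀, t • (z - x₀)⟫ = t * (c - ‖x₀‖ ^ 2) := by
      rw [real_inner_smul_right, inner_sub_right, real_inner_self_eq_norm_sq, ← hc]
    have e2 : ‖t • (z - x₀)‖ ^ 2 = t ^ 2 * N := by
      rw [norm_smul, mul_pow, hN, Real.norm_eq_abs, sq_abs]
    have hsq : ‖x₀ + t • (z - x₀)‖ ^ 2 = ‖x₀‖ ^ 2 + 2 * (t * (c - ‖x₀‖ ^ 2)) + t ^ 2 * N := by
      rw [norm_add_sq_real, e1, e2]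
    have hge2 : ‖x₀‖ ^ 2 ≤ ‖x₀ + t • (z - x₀)‖ ^ 2 := by
      have := norm_nonneg x₀
      nlinarith
    nlinarith [mul_le_mul_of_nonneg_left htN ht0.le, mul_pos ht0 (sub_pos.mpr hz_half)]
  by_cases hI : (none : Option (Fin (d + 1))) ∈ I
  · exact main Iᶜ z (fun h => h hI) hzIc (by rwa [compl_compl])
  · exact main I z hI hzI hzIc

theorem no_complete_tuple_of_convex (d : ℕ)
    (F : Finset (Set (EuclideanSpace ℝ (Fin d))))
    (hconv : ∀ K ∈ F, Convex ℝ K) :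
    ¬ ∃ τ : Fin (d + 1) → Finset (Set (EuclideanSpace ℝ (Fin d))),
        (∀ i, τ i ⊆ F ∧ (τ i).card = d + 1 ∧ (⋂ K ∈ (τ i), K) = ∅) ∧
        (∀ i j, i ≠ j → Disjoint (τ i) (τ j)) ∧
        (∀ t : Fin (d + 1) → Set (EuclideanSpace ℝ (Fin d)),
          (∀ i, t i ∈ τ i) → (⋂ i, t i).Nonempty) := by
  classical
  rintro ⟨τ, h1, -, h3⟩
  let R : Finset (Fin (d + 1) → Set (EuclideanSpace ℝ (Fin d))) := Fintype.piFinset τ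
  have hR : ∀ σ : Fin (d + 1) → Set (EuclideanSpace ℝ (Fin d)), σ ∈ R ↔ ∀ i, σ i ∈ τ i :=
    fun σ => Fintype.mem_piFinset
  have hRne : R.Nonempty := by
    have hex : ∀ i, ∃ K, K ∈ τ i := by
      intro i
      have : 0 < (τ i).card := by rw [(h1 i).2.1]; omega
      exact Finset.card_pos.mp this
    choose g hg using hex
    exact ⟨g, (hR g).mpr hg⟩
  have hwit : ∀ σ ∈ R, (⋂ i, σ i).Nonempty := fun σ hσ => h3 σ ((hR σ).mp hσ)
  choose! p hp using hwit
  have hpmem : ∀ σ ∈ R, ∀ i, p σ ∈ σ i := fun σ h i => Set.mem_iInter.mp (hp σ h) i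
  let Q : Fin (d + 1) → Set (EuclideanSpace ℝ (Fin d)) → Set (EuclideanSpace ℝ (Fin d)) :=
    fun i K => convexHull ℝ (p '' {ρ | ρ ∈ R ∧ ρ i = K})
  have hQsub : ∀ i K, K ∈ τ i → Q i K ⊆ K := by
    intro i K hK
    apply convexHull_min _ (hconv K ((h1 i).1 hK))
    rintro x ⟨ρ, ⟨hρ, hρi⟩, rfl⟩
    have := hpmem ρ hρ i
    rwa [hρi] at this
  have hQconv : ∀ i K, Convex ℝ (Q i K) := fun i K => convex_convexHull ℝ _
  have hQcomp : ∀ i K, IsCompact (Q i K) := by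
    intro i K
    apply Set.Finite.isCompact_convexHull
    exact (R.finite_toSet.subset (fun ρ h => h.1)).image p
  have hpQ : ∀ σ ∈ R, ∀ i, p σ ∈ Q i (σ i) :=
    fun σ h i => subset_convexHull ℝ _ ⟨σ, ⟨h, rfl⟩, rfl⟩
  have hminex : ∀ σ ∈ R, ∃ x, (∀ i, x ∈ Q i (σ i)) ∧ ∀ y, (∀ i, y ∈ Q i (σ i)) → ‖x‖ ≤ ‖y‖ := by
    intro σ hσ
    have hcomp : IsCompact (⋂ i, Q i (σ i)) :=
      IsCompact.of_isClosed_subset (hQcomp 0 (σ 0))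
        (isClosed_iInter fun i => (hQcomp i (σ i)).isClosed)
        (Set.iInter_subset _ 0)
    have hne : (⋂ i, Q i (σ i)).Nonempty := ⟨p σ, Set.mem_iInter.mpr (hpQ σ hσ)⟩
    obtain ⟨x, hx, hxm⟩ := hcomp.exists_isMinOn hne (continuous_norm.continuousOn)
    exact ⟨x, Set.mem_iInter.mp hx, fun y hy => hxm (Set.mem_iInter.mpr hy)⟩
  choose! v hv1 hv2 using hminex
  obtain ⟨σs, hσs, hmax⟩ := R.exists_max_image (fun σ => ‖v σ‖) hRne
  have key : ∀ i, ∃ A ∈ τ i, v σs ∉ Q i A := by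
    intro i
    by_contra h
    push_neg at h
    have hmem : v σs ∈ ⋂ K ∈ τ i, K :=
      Set.mem_iInter₂.mpr (fun K hK => hQsub i K hK (h K hK))
    rw [(h1 i).2.2] at hmem
    exact hmem
  choose A hA hA2 using key
  have hupdR : ∀ i, Function.update σs i (A i) ∈ R := by
    intro i
    rw [hR]
    intro j
    rcases eq_or_ne j i with rfl | hne
    · simpa using hA j
    · rw [Function.update_of_ne hne]
      exact (hR σs).mp hσs j
  apply helly_core d (fun j => Q j (σs j)) (fun j => hQconv j (σs j)) (v σs)
    (hv1 σs hσs) (hv2 σs hσs) (fun i => v (Function.update σs i (A i)))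
  · intro i j hne
    have := hv1 _ (hupdR i) j
    rwa [Function.update_of_ne hne] at this
  · intro i
    have hun : ‖v (Function.update σs i (A i))‖ ≤ ‖v σs‖ := hmax _ (hupdR i)
    have huiA : v (Function.update σs i (A i)) ∈ Q i (A i) := by
      have := hv1 _ (hupdR i) i
      rwa [Function.update_self] at this
    have hne : v (Function.update σs i (A i)) ≠ v σs := fun h => hA2 i (h ▸ huiA)
    have h0 : 0 < ‖v σs - v (Function.update σs i (A i))‖ ^ 2 :=
      pow_pos (norm_pos_iff.mpr (sub_ne_zero.mpr (fun h => hne h.symm))) 2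
    have hexp := norm_sub_sq_real (v σs) (v (Function.update σs i (A i)))
    nlinarith [norm_nonneg (v (Function.update σs i (A i))), norm_nonneg (v σs)]
end
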